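/- arXiv:1411.6917 — 4 statements merged into one kernel-verified Lean document; each statement's English description precedes it below -/
import Mathlib

section
/- For all integers n ≥ 1 and m, k ≥ 0 with δ_i ∈ {0,1}, if f(k⃗) and g(k⃗) are weighted counts of finite sets A_{k⃗} and B_{k⃗} and there exist weight-preserving bijections φ_{k⃗} : A_{k⃗} ∪ (⋃_{i: δ_i=0} H_{i,S_i k⃗}) → B_{k⃗} ∪ (⋃_{i=1}^m H_{i,k⃗}) ∪ (⋃_{i: δ_i=1} H_{i,S_i k⃗}), where S_i shifts the i-th coordinate by 1, and the sets H_{i,k⃗} are empty for k⃗ = 0 and for all sufficiently large k⃗, then ∑_{k⃗≥0} (-1)^{δ⃗·k⃗} f(k⃗) = ∑_{k⃗≥0} (-1)^{δ⃗·k⃗} g(k⃗). -/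
open Finset

/-- The shift operator `S_i` on multi-indices: `S_i κ` increases the `i`-th coordinate
of `κ` by one. -/
def shiftIdx {m : ℕ} (i : Fin m) (κ : Fin m → ℕ) : Fin m → ℕ :=
  Function.update κ i (κ i + 1)

lemma shiftIdx_injective {m : ℕ} (i : Fin m) : Function.Injective (shiftIdx i) := by
  intro κ κ' h
  funext j
  have hj := congrFun h j
  by_cases hji : j = i
  · subst hji; simpa [shiftIdx, Function.update] using hj
  · simpa [shiftIdx, Function.update, hji] using hj

lemma shiftIdx_dot {m : ℕ} (δ : Fin m → ℕ) (i : Fin m) (κ : Fin m → ℕ) :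
    ∑ j, δ j * shiftIdx i κ j = δ i + ∑ j, δ j * κ j := by
  have h : ∀ j, δ j * shiftIdx i κ j = (if j = i then δ i else 0) + δ j * κ j := by
    intro j
    by_cases hji : j = i
    · subst hji; simp [shiftIdx, Function.update]; ring
    · simp [shiftIdx, Function.update, hji]
  rw [Finset.sum_congr rfl fun j _ => h j, Finset.sum_add_distrib,
    Finset.sum_ite_eq' Finset.univ i]
  simp

/-- The method of multiple combinatorial telescoping: let `f(κ) = ∑_{α ∈ A_κ} w(α)` and
`g(κ) = ∑_{α ∈ B_κ} w(α)` be weighted counts of finite sets indexed by multi-indices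
`κ : Fin m → ℕ`, with weights in a commutative ring, and let `δ : Fin m → ℕ` take values
in `{0,1}`.  Suppose the auxiliary sets `H_{i,κ}` are empty whenever `κ_i = 0` and for all
sufficiently large `κ`, that the sums `∑_κ (±1)^{δ·κ} f(κ)` and `∑_κ (±1)^{δ·κ} g(κ)` have
finite support, and that for every `κ` there is a weight-preserving bijection
`φ_κ : A_κ ⊔ (⊔_{i : δ_i = 0} H_{i, S_i κ}) →
  B_κ ⊔ (⊔_{i} H_{i,κ}) ⊔ (⊔_{i : δ_i = 1} H_{i, S_i κ})`.
Then `∑_κ (-1)^{δ·κ} f(κ) = ∑_κ (-1)^{δ·κ} g(κ)`. -/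
theorem multiple_combinatorial_telescoping
    {R : Type*} [CommRing R] {α : Type*} (w : α → R) (m : ℕ)
    (δ : Fin m → ℕ) (hδ : ∀ i, δ i ≤ 1)
    (A B : (Fin m → ℕ) → Finset α) (H : Fin m → (Fin m → ℕ) → Finset α)
    (hfA : (Function.support fun κ : Fin m → ℕ =>
      (-1 : R) ^ (∑ i, δ i * κ i) * ∑ a ∈ A κ, w a).Finite)
    (hfB : (Function.support fun κ : Fin m → ℕ =>
      (-1 : R) ^ (∑ i, δ i * κ i) * ∑ a ∈ B κ, w a).Finite)
    (hH0 : ∀ (i : Fin m) (κ : Fin m → ℕ), κ i = 0 → H i κ = ∅)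
    (hHbig : ∃ N : ℕ, ∀ (i : Fin m) (κ : Fin m → ℕ), N ≤ ∑ j, κ j → H i κ = ∅)
    (hbij : ∀ κ : Fin m → ℕ,
      ∃ e : (↥(A κ) ⊕ Σ i : {i : Fin m // δ i = 0}, ↥(H i.1 (shiftIdx i.1 κ))) ≃
            (↥(B κ) ⊕ (Σ i : Fin m, ↥(H i κ)) ⊕
              Σ i : {i : Fin m // δ i = 1}, ↥(H i.1 (shiftIdx i.1 κ))),
        ∀ x,
          Sum.elim (fun b => w b.1)
            (Sum.elim (fun s => w s.2.1) (fun s => w s.2.1)) (e x) =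
          Sum.elim (fun a => w a.1) (fun s => w s.2.1) x) :
    ∑ᶠ κ : Fin m → ℕ, (-1 : R) ^ (∑ i, δ i * κ i) * ∑ a ∈ A κ, w a =
      ∑ᶠ κ : Fin m → ℕ, (-1 : R) ^ (∑ i, δ i * κ i) * ∑ a ∈ B κ, w a := by
  classical
  obtain ⟨N, hN⟩ := hHbig
  set s : (Fin m → ℕ) → R := fun κ => (-1 : R) ^ (∑ i, δ i * κ i) with hs
  set h : Fin m → (Fin m → ℕ) → R := fun i κ => ∑ a ∈ H i κ, w a with hh
  set G : Fin m → (Fin m → ℕ) → R := fun i κ => s κ * h i κ with hG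
  -- the big box
  obtain ⟨M, hNM, hKM⟩ : ∃ M : ℕ, N ≤ M ∧
      ∀ κ ∈ hfA.toFinset ∪ hfB.toFinset, ∑ j, κ j < M :=
    ⟨N + ((hfA.toFinset ∪ hfB.toFinset).sup fun κ => ∑ j, κ j) + 1,
      Nat.le_succ_of_le (Nat.le_add_right _ _),
      fun κ hκ => Nat.lt_succ_of_le ((Finset.le_sup hκ).trans (Nat.le_add_left _ _))⟩
  set box : Finset (Fin m → ℕ) := Fintype.piFinset fun _ : Fin m => Finset.range M with hbox
  have hTbox : ∀ κ ∈ hfA.toFinset ∪ hfB.toFinset, κ ∈ box := by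
    intro κ hκ
    simp only [hbox, Fintype.mem_piFinset, Finset.mem_range]
    intro j
    have h2 : κ j ≤ ∑ j, κ j := Finset.single_le_sum (fun _ _ => Nat.zero_le _) (Finset.mem_univ j)
    exact lt_of_le_of_lt h2 (hKM κ hκ)
  -- G vanishing conditions
  have hGzero : ∀ (i : Fin m) (κ : Fin m → ℕ), κ i = 0 → G i κ = 0 := by
    intro i κ hκ; simp [hG, hh, hH0 i κ hκ]
  have hGbig : ∀ (i : Fin m) (κ : Fin m → ℕ), N ≤ ∑ j, κ j → G i κ = 0 := by
    intro i κ hκ; simp [hG, hh, hN i κ hκ]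
  -- key identity from the bijections
  have key : ∀ κ : Fin m → ℕ,
      (∑ a ∈ A κ, w a) + (∑ i ∈ Finset.univ.filter fun i => δ i = 0, h i (shiftIdx i κ))
      = (∑ a ∈ B κ, w a) + ((∑ i, h i κ)
          + ∑ i ∈ Finset.univ.filter fun i => δ i = 1, h i (shiftIdx i κ)) := by
    intro κ
    obtain ⟨e, he⟩ := hbij κ
    have h1 := Fintype.sum_equiv e
      (fun x => Sum.elim (fun a => w a.1) (fun s => w s.2.1) x)
      (fun y => Sum.elim (fun b => w b.1)
        (Sum.elim (fun s => w s.2.1) (fun s => w s.2.1)) y)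
      (fun x => (he x).symm)
    simp only [Fintype.sum_sum_type, Sum.elim_inl, Sum.elim_inr] at h1
    have cA : ∑ x : ↥(A κ), w x.1 = ∑ a ∈ A κ, w a := Finset.sum_coe_sort (A κ) w
    have cB : ∑ x : ↥(B κ), w x.1 = ∑ a ∈ B κ, w a := Finset.sum_coe_sort (B κ) w
    have sig0 : ∑ x : (Σ i : {i : Fin m // δ i = 0}, ↥(H i.1 (shiftIdx i.1 κ))), w x.2.1
        = ∑ i ∈ Finset.univ.filter fun i => δ i = 0, h i (shiftIdx i κ) := by
      rw [← Finset.univ_sigma_univ, Finset.sum_sigma,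
        Finset.sum_subtype (p := fun i => δ i = 0) (Finset.univ.filter fun i => δ i = 0)
          (by simp) (fun i => h i (shiftIdx i κ))]
      exact Finset.sum_congr rfl fun i _ => Finset.sum_coe_sort _ w
    have sig1 : ∑ x : (Σ i : {i : Fin m // δ i = 1}, ↥(H i.1 (shiftIdx i.1 κ))), w x.2.1
        = ∑ i ∈ Finset.univ.filter fun i => δ i = 1, h i (shiftIdx i κ) := by
      rw [← Finset.univ_sigma_univ, Finset.sum_sigma,
        Finset.sum_subtype (p := fun i => δ i = 1) (Finset.univ.filter fun i => δ i = 1)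
          (by simp) (fun i => h i (shiftIdx i κ))]
      exact Finset.sum_congr rfl fun i _ => Finset.sum_coe_sort _ w
    have sigall : ∑ x : (Σ i : Fin m, ↥(H i κ)), w x.2.1 = ∑ i, h i κ := by
      rw [← Finset.univ_sigma_univ, Finset.sum_sigma]
      exact Finset.sum_congr rfl fun i _ => Finset.sum_coe_sort _ w
    rw [cA, cB, sig0, sig1, sigall] at h1
    linear_combination h1
  -- s of shift
  have hsS : ∀ (i : Fin m) (κ : Fin m → ℕ), s (shiftIdx i κ) = (-1 : R) ^ (δ i) * s κ := by
    intro i κ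
    simp only [hs, shiftIdx_dot, pow_add]
  -- pointwise identity
  have point : ∀ κ : Fin m → ℕ,
      s κ * (∑ a ∈ A κ, w a) - s κ * (∑ a ∈ B κ, w a)
        = ∑ i, (G i κ - G i (shiftIdx i κ)) := by
    intro κ
    have hsplit : ∑ i, G i (shiftIdx i κ)
        = s κ * (∑ i ∈ Finset.univ.filter fun i => δ i = 0, h i (shiftIdx i κ))
          - s κ * (∑ i ∈ Finset.univ.filter fun i => δ i = 1, h i (shiftIdx i κ)) := by
      rw [← Finset.sum_filter_add_sum_filter_not Finset.univ (fun i => δ i = 0)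
        (fun i => G i (shiftIdx i κ))]
      have e0 : ∑ i ∈ Finset.univ.filter fun i => δ i = 0, G i (shiftIdx i κ)
          = s κ * ∑ i ∈ Finset.univ.filter fun i => δ i = 0, h i (shiftIdx i κ) := by
        rw [Finset.mul_sum]
        refine Finset.sum_congr rfl fun i hi => ?_
        rw [Finset.mem_filter] at hi
        simp [hG, hsS, hi.2]
      have e1 : ∑ i ∈ Finset.univ.filter (fun i => ¬ δ i = 0), G i (shiftIdx i κ)
          = - (s κ * ∑ i ∈ Finset.univ.filter fun i => δ i = 1, h i (shiftIdx i κ)) := by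
        have hfe : Finset.univ.filter (fun i => ¬ δ i = 0)
            = Finset.univ.filter fun i => δ i = 1 := by
          apply Finset.filter_congr
          intro i _
          have := hδ i
          constructor <;> intro <;> omega
        rw [hfe, Finset.mul_sum, ← Finset.sum_neg_distrib]
        refine Finset.sum_congr rfl fun i hi => ?_
        rw [Finset.mem_filter] at hi
        simp only [hG, hsS, hi.2]
        ring
      rw [e0, e1]; ring
    have hsum : ∑ i, (G i κ - G i (shiftIdx i κ)) = (∑ i, G i κ) - ∑ i, G i (shiftIdx i κ) :=
      Finset.sum_sub_distrib _ _
    have hGk : ∑ i, G i κ = s κ * ∑ i, h i κ := by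
      rw [Finset.mul_sum]
    rw [hsum, hGk, hsplit]
    have := key κ
    linear_combination s κ * this
  -- telescoping over the box
  have tele : ∀ i : Fin m, ∑ κ ∈ box, G i (shiftIdx i κ) = ∑ κ ∈ box, G i κ := by
    intro i
    have himg : ∑ κ ∈ box, G i (shiftIdx i κ) = ∑ κ' ∈ box.image (shiftIdx i), G i κ' :=
      (Finset.sum_image fun x _ y _ hxy => shiftIdx_injective i hxy).symm
    rw [himg]
    have e1 : ∑ κ' ∈ box.image (shiftIdx i), G i κ' = ∑ κ' ∈ box ∪ box.image (shiftIdx i), G i κ' := by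
      apply Finset.sum_subset Finset.subset_union_right
      intro κ' hκ' hnot
      have hbb : κ' ∈ box := by
        rcases Finset.mem_union.1 hκ' with hb | hb
        · exact hb
        · exact absurd hb hnot
      by_cases hz : κ' i = 0
      · exact hGzero i κ' hz
      · exfalso
        apply hnot
        rw [Finset.mem_image]
        refine ⟨Function.update κ' i (κ' i - 1), ?_, ?_⟩
        · simp only [hbox, Fintype.mem_piFinset, Finset.mem_range] at hbb ⊢
          intro j
          by_cases hji : j = i
          · subst hji; simp [Function.update]; have := hbb j; omega
          · simp [Function.update, hji]; exact hbb j
        · funext j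
          by_cases hji : j = i
          · subst hji; simp [shiftIdx, Function.update]; omega
          · simp [shiftIdx, Function.update, hji]
    have e2 : ∑ κ' ∈ box, G i κ' = ∑ κ' ∈ box ∪ box.image (shiftIdx i), G i κ' := by
      apply Finset.sum_subset Finset.subset_union_left
      intro κ' _ hnot
      apply hGbig
      simp only [hbox, Fintype.mem_piFinset, Finset.mem_range] at hnot
      push_neg at hnot
      obtain ⟨j, hj⟩ := hnot
      have h2 : κ' j ≤ ∑ j, κ' j := Finset.single_le_sum (fun _ _ => Nat.zero_le _) (Finset.mem_univ j)
      omega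
    rw [e1, ← e2]
  -- assemble
  have hsubA : (Function.support fun κ : Fin m → ℕ => s κ * ∑ a ∈ A κ, w a) ⊆ ↑box := by
    intro κ hκ
    exact hTbox κ (Finset.mem_union_left _ (hfA.mem_toFinset.2 hκ))
  have hsubB : (Function.support fun κ : Fin m → ℕ => s κ * ∑ a ∈ B κ, w a) ⊆ ↑box := by
    intro κ hκ
    exact hTbox κ (Finset.mem_union_right _ (hfB.mem_toFinset.2 hκ))
  rw [finsum_eq_finset_sum_of_support_subset _ hsubA,
      finsum_eq_finset_sum_of_support_subset _ hsubB]
  rw [← sub_eq_zero, ← Finset.sum_sub_distrib]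
  calc ∑ κ ∈ box, (s κ * (∑ a ∈ A κ, w a) - s κ * (∑ a ∈ B κ, w a))
      = ∑ κ ∈ box, ∑ i, (G i κ - G i (shiftIdx i κ)) := Finset.sum_congr rfl fun κ _ => point κ
    _ = ∑ i, ∑ κ ∈ box, (G i κ - G i (shiftIdx i κ)) := Finset.sum_comm
    _ = 0 := by
        refine Finset.sum_eq_zero fun i _ => ?_
        rw [Finset.sum_sub_distrib, tele i, sub_self]
end

section
/- As an identity of formal power series in a and q: ∑_{m,k≥0} (-a)^m q^{(m-k)^2+k^2+m-k} / (aq^2;q^2)_m · qbinom(m, 2k-1) = ∑_{n≥1} (-a)^n q^{n^2}, where qbinom(m, 2k-1) denotes the Gaussian binomial coefficient [m choose 2k-1]_q, interpreted as zero when 2k-1 < 0 or 2k-1 > m. -/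
open PowerSeries Finset

/-- The q-Pochhammer symbol `(a; q)_n = ∏_{j=0}^{n-1} (1 - a q^j)` in `ℤ[[q]]`. -/
noncomputable def qPoch (a : PowerSeries ℤ) (n : ℕ) : PowerSeries ℤ :=
  ∏ j ∈ Finset.range n, (1 - a * PowerSeries.X ^ j)

/-- The Gaussian binomial coefficient `[m choose r]_q = (q;q)_m / ((q;q)_r (q;q)_{m-r})`
as an element of `ℤ[[q]]` (zero when `r > m`). -/
noncomputable def gaussBinom (m r : ℕ) : PowerSeries ℤ :=
  if r ≤ m then
    qPoch PowerSeries.X m *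
      Ring.inverse (qPoch PowerSeries.X r * qPoch PowerSeries.X (m - r))
  else 0

/-- We work in `ℤ[[q]][[a]]`, with `a` the outer variable and `q` the inner one. -/
noncomputable abbrev Aq : Type := PowerSeries (PowerSeries ℤ)

/-- `(a q^2; q^2)_m = ∏_{j=0}^{m-1} (1 - a q^{2j+2})` as an element of `ℤ[[q]][[a]]`. -/
noncomputable def pochA (m : ℕ) : Aq :=
  ∏ j ∈ Finset.range m,
    (1 - PowerSeries.X * PowerSeries.C (R := PowerSeries ℤ) (PowerSeries.X ^ (2 * j + 2)))

-- abbreviations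

lemma constCoeff_qPoch (n : ℕ) : constantCoeff (R := ℤ) (qPoch PowerSeries.X n) = 1 := by
  simp [qPoch, map_prod]

lemma isUnit_qPoch (n : ℕ) : IsUnit (qPoch PowerSeries.X n) := by
  rw [PowerSeries.isUnit_iff_constantCoeff, constCoeff_qPoch]; exact isUnit_one

lemma ring_inverse_eq {M : Type*} [CommMonoidWithZero M] {a b : M} (h : a * b = 1) :
    Ring.inverse a = b := by
  have ha : IsUnit a := IsUnit.of_mul_eq_one b h
  have := Ring.inverse_mul_cancel a ha
  calc Ring.inverse a = Ring.inverse a * (a * b) := by rw [h, mul_one]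
    _ = (Ring.inverse a * a) * b := by rw [mul_assoc]
    _ = b := by rw [this, one_mul]

lemma qPoch_succ (n : ℕ) :
    qPoch PowerSeries.X (n + 1) = qPoch PowerSeries.X n * (1 - PowerSeries.X ^ (n+1)) := by
  rw [qPoch, Finset.prod_range_succ, ← qPoch]; ring_nf

lemma gaussBinom_mul {m r : ℕ} (h : r ≤ m) :
    gaussBinom m r * (qPoch PowerSeries.X r * qPoch PowerSeries.X (m - r)) =
      qPoch PowerSeries.X m := by
  rw [gaussBinom, if_pos h, mul_assoc, Ring.inverse_mul_cancel _ ((isUnit_qPoch r).mul (isUnit_qPoch (m-r))), mul_one]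

lemma gaussBinom_zero (m : ℕ) : gaussBinom m 0 = 1 := by
  rw [gaussBinom, if_pos (Nat.zero_le m)]
  have : qPoch PowerSeries.X 0 = 1 := by simp [qPoch]
  rw [this, Nat.sub_zero, one_mul, Ring.mul_inverse_cancel _ (isUnit_qPoch m)]

lemma gaussBinom_self (m : ℕ) : gaussBinom m m = 1 := by
  rw [gaussBinom, if_pos le_rfl, Nat.sub_self]
  have : qPoch PowerSeries.X 0 = 1 := by simp [qPoch]
  rw [this, mul_one, Ring.mul_inverse_cancel _ (isUnit_qPoch m)]

lemma gaussBinom_of_gt {m r : ℕ} (h : m < r) : gaussBinom m r = 0 := by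
  rw [gaussBinom, if_neg (by omega)]

lemma gaussBinom_pascal {m r : ℕ} (h : r ≤ m) :
    gaussBinom (m+1) (r+1)
      = gaussBinom m r + PowerSeries.X ^ (r+1) * gaussBinom m (r+1) := by
  rcases eq_or_lt_of_le h with rfl | hlt
  · rw [gaussBinom_self, gaussBinom_self, gaussBinom_of_gt (Nat.lt_succ_self r), mul_zero, add_zero]
  · -- r + 1 ≤ m
    have hr1 : r + 1 ≤ m := hlt
    have hu : IsUnit (qPoch PowerSeries.X (r+1) * qPoch PowerSeries.X (m - r)) :=
      (isUnit_qPoch (r+1)).mul (isUnit_qPoch (m-r))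
    apply hu.mul_left_cancel
    have hmr : m - r = (m - (r+1)) + 1 := by omega
    have e1 : (m+1) - (r+1) = m - r := by omega
    -- LHS
    have L : (qPoch PowerSeries.X (r+1) * qPoch PowerSeries.X (m - r)) * gaussBinom (m+1) (r+1)
        = qPoch PowerSeries.X (m+1) := by
      rw [mul_comm, ← e1] at *
      rw [gaussBinom_mul (by omega)]
    rw [L]
    rw [mul_add]
    have T1 : (qPoch PowerSeries.X (r+1) * qPoch PowerSeries.X (m - r)) * gaussBinom m r
        = (1 - PowerSeries.X ^ (r+1)) * qPoch PowerSeries.X m := by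
      rw [qPoch_succ r]
      calc qPoch PowerSeries.X r * (1 - PowerSeries.X ^ (r+1)) * qPoch PowerSeries.X (m - r) * gaussBinom m r
          = (1 - PowerSeries.X ^ (r+1)) * (gaussBinom m r * (qPoch PowerSeries.X r * qPoch PowerSeries.X (m - r))) := by ring
        _ = (1 - PowerSeries.X ^ (r+1)) * qPoch PowerSeries.X m := by rw [gaussBinom_mul h]
    have T2 : (qPoch PowerSeries.X (r+1) * qPoch PowerSeries.X (m - r)) * (PowerSeries.X ^ (r+1) * gaussBinom m (r+1))
        = PowerSeries.X ^ (r+1) * ((1 - PowerSeries.X ^ (m - r)) * qPoch PowerSeries.X m) := by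
      rw [hmr, qPoch_succ (m - (r+1))]
      have h2 : m - (r+1) + 1 = m - r := by omega
      rw [h2]
      calc qPoch PowerSeries.X (r+1) * (qPoch PowerSeries.X (m - (r+1)) * (1 - PowerSeries.X ^ (m-r))) * (PowerSeries.X ^ (r+1) * gaussBinom m (r+1))
          = PowerSeries.X ^ (r+1) * ((1 - PowerSeries.X ^ (m-r)) * (gaussBinom m (r+1) * (qPoch PowerSeries.X (r+1) * qPoch PowerSeries.X (m - (r+1))))) := by ring
        _ = _ := by rw [gaussBinom_mul hr1]
    rw [T1, T2, qPoch_succ m]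
    have hx : PowerSeries.X ^ (r+1) * PowerSeries.X ^ (m - r) = (PowerSeries.X : PowerSeries ℤ) ^ (m+1) := by
      rw [← pow_add]; congr 1; omega
    calc qPoch PowerSeries.X m * (1 - PowerSeries.X ^ (m+1))
        = qPoch PowerSeries.X m - qPoch PowerSeries.X m * (PowerSeries.X ^ (r+1) * PowerSeries.X ^ (m-r)) := by rw [hx]; ring
      _ = (1 - PowerSeries.X ^ (r+1)) * qPoch PowerSeries.X m + PowerSeries.X ^ (r+1) * ((1 - PowerSeries.X ^ (m-r)) * qPoch PowerSeries.X m) := by ring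

noncomputable def Sq (m : ℕ) : PowerSeries ℤ :=
  ∑ k ∈ Finset.range (m+1),
    if 1 ≤ k ∧ 2*k-1 ≤ m then
      PowerSeries.X ^ ((m-k)^2 + k^2 + (m-k)) * gaussBinom m (2*k-1) else 0

noncomputable def Uq (m : ℕ) : PowerSeries ℤ :=
  ∑ j ∈ Finset.range (m+1),
    if 2*j ≤ m then
      PowerSeries.X ^ ((m-j)^2 + j^2 + (m+j)) * gaussBinom m (2*j) else 0

lemma Sq_zero : Sq 0 = 0 := by simp [Sq]

lemma Uq_zero : Uq 0 = 1 := by simp [Uq, gaussBinom_zero]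

lemma Sq_eq (m : ℕ) : Sq m = ∑ j ∈ Finset.range (m+1),
    (if 2*j+1 ≤ m then
      PowerSeries.X ^ ((m-(j+1))^2 + (j+1)^2 + (m-(j+1))) * gaussBinom m (2*j+1) else 0) := by
  rw [Sq, Finset.sum_range_succ' _ m, Finset.sum_range_succ]
  have h0 : (if 1 ≤ 0 ∧ 2*0-1 ≤ m then PowerSeries.X ^ ((m-0)^2 + 0^2 + (m-0)) * gaussBinom m (2*0-1) else (0:PowerSeries ℤ)) = 0 := by
    norm_num
  have hm : (if 2*m+1 ≤ m then PowerSeries.X ^ ((m-(m+1))^2 + (m+1)^2 + (m-(m+1))) * gaussBinom m (2*m+1) else (0:PowerSeries ℤ)) = 0 := by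
    rw [if_neg (by omega)]
  rw [h0, hm, add_zero, add_zero]
  apply Finset.sum_congr rfl
  intro j _
  have hc : (1 ≤ j+1 ∧ 2*(j+1)-1 ≤ m) ↔ (2*j+1 ≤ m) := by omega
  have he : 2*(j+1)-1 = 2*j+1 := by omega
  rw [he]
  exact if_congr hc rfl rfl

lemma Sq_succ (m : ℕ) :
    Sq (m+1) = PowerSeries.X * Uq m + PowerSeries.X ^ (2*m+1) * Sq m := by
  have expand : ∀ j ∈ Finset.range (m+2),
      (if 2*j+1 ≤ m+1 then
        PowerSeries.X ^ ((m+1-(j+1))^2 + (j+1)^2 + (m+1-(j+1))) * gaussBinom (m+1) (2*j+1) else 0)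
      = PowerSeries.X * (if 2*j ≤ m then PowerSeries.X ^ ((m-j)^2 + j^2 + (m+j)) * gaussBinom m (2*j) else 0)
        + PowerSeries.X ^ (2*m+1) * (if 2*j+1 ≤ m then PowerSeries.X ^ ((m-(j+1))^2 + (j+1)^2 + (m-(j+1))) * gaussBinom m (2*j+1) else 0) := by
    intro j _
    by_cases h1 : 2*j ≤ m
    · rw [if_pos (by omega : 2*j+1 ≤ m+1), if_pos h1]
      have hp : m+1-(j+1) = m - j := by omega
      rw [hp, gaussBinom_pascal (by omega : 2*j ≤ m), mul_add]
      by_cases h2 : 2*j+1 ≤ m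
      · rw [if_pos h2]
        obtain ⟨d, rfl⟩ : ∃ d, m = j+1+d := ⟨m-j-1, by omega⟩
        have e1 : j+1+d - j = d+1 := by omega
        have e2 : j+1+d-(j+1) = d := by omega
        rw [e1, e2]
        ring
      · rw [if_neg h2]
        have hz : gaussBinom m (2*j+1) = 0 := gaussBinom_of_gt (by omega)
        rw [hz, mul_zero, mul_zero, mul_zero, add_zero, add_zero]
        obtain rfl : m = 2*j := by omega
        have e1 : 2*j - j = j := by omega
        rw [e1]
        ring
    · rw [if_neg (by omega), if_neg h1, if_neg (by omega), mul_zero, mul_zero, add_zero]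
  have S1 : (∑ j ∈ Finset.range (m+2),
        PowerSeries.X * (if 2*j ≤ m then PowerSeries.X ^ ((m-j)^2 + j^2 + (m+j)) * gaussBinom m (2*j) else 0))
      = PowerSeries.X * Uq m := by
    rw [Uq, Finset.mul_sum, Finset.sum_range_succ, if_neg (by omega : ¬ 2*(m+1) ≤ m), mul_zero, add_zero]
  have S2 : (∑ j ∈ Finset.range (m+2),
        PowerSeries.X ^ (2*m+1) * (if 2*j+1 ≤ m then PowerSeries.X ^ ((m-(j+1))^2 + (j+1)^2 + (m-(j+1))) * gaussBinom m (2*j+1) else 0))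
      = PowerSeries.X ^ (2*m+1) * Sq m := by
    rw [Sq_eq m, Finset.mul_sum, Finset.sum_range_succ, if_neg (by omega : ¬ 2*(m+1)+1 ≤ m), mul_zero, add_zero]
  rw [Sq_eq (m+1), Finset.sum_congr rfl expand, Finset.sum_add_distrib, S1, S2]

lemma Uq_succ (m : ℕ) :
    Uq (m+1) = PowerSeries.X ^ (2*m+2) * (Uq m + Sq m) := by
  have expand : ∀ j ∈ Finset.range (m+1),
      (if 2*(j+1) ≤ m+1 then
        PowerSeries.X ^ ((m+1-(j+1))^2 + (j+1)^2 + (m+1+(j+1))) * gaussBinom (m+1) (2*(j+1)) else 0)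
      = PowerSeries.X ^ (2*m+2) * (if 2*(j+1) ≤ m then PowerSeries.X ^ ((m-(j+1))^2 + (j+1)^2 + (m+(j+1))) * gaussBinom m (2*(j+1)) else 0)
        + PowerSeries.X ^ (2*m+2) * (if 2*j+1 ≤ m then PowerSeries.X ^ ((m-(j+1))^2 + (j+1)^2 + (m-(j+1))) * gaussBinom m (2*j+1) else 0) := by
    intro j _
    by_cases h1 : 2*j+1 ≤ m
    · rw [if_pos (by omega : 2*(j+1) ≤ m+1)]
      have hp : m+1-(j+1) = m - j := by omega
      have hpas : gaussBinom (m+1) (2*(j+1)) = gaussBinom m (2*j+1) + PowerSeries.X ^ (2*(j+1)) * gaussBinom m (2*(j+1)) := by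
        have h := gaussBinom_pascal (m := m) (r := 2*j+1) h1
        have e : 2*j+1+1 = 2*(j+1) := by omega
        rw [e] at h; exact h
      rw [hp, hpas, if_pos h1, mul_add]
      by_cases h2 : 2*(j+1) ≤ m
      · rw [if_pos h2]
        obtain ⟨d, rfl⟩ : ∃ d, m = j+1+d := ⟨m-j-1, by omega⟩
        have e1 : j+1+d - j = d+1 := by omega
        have e2 : j+1+d-(j+1) = d := by omega
        rw [e1, e2]
        ring
      · rw [if_neg h2]
        have hz : gaussBinom m (2*(j+1)) = 0 := gaussBinom_of_gt (by omega)
        rw [hz, mul_zero, mul_zero, mul_zero, add_zero]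
        obtain rfl : m = 2*j+1 := by omega
        have e1 : 2*j+1 - j = j+1 := by omega
        have e2 : 2*j+1-(j+1) = j := by omega
        rw [e1, e2]
        ring
    · rw [if_neg (by omega), if_neg (by omega), if_neg h1, mul_zero, add_zero]
  have T : (PowerSeries.X : PowerSeries ℤ) ^ ((m+1)^2 + (m+1)) = PowerSeries.X ^ (2*m+2) * PowerSeries.X ^ (m^2 + m) := by
    rw [← pow_add]; congr 1; ring
  have C1 : Uq (m+1) = (∑ j ∈ Finset.range (m+1),
      (if 2*(j+1) ≤ m+1 then
        PowerSeries.X ^ ((m+1-(j+1))^2 + (j+1)^2 + (m+1+(j+1))) * gaussBinom (m+1) (2*(j+1)) else 0))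
      + PowerSeries.X ^ ((m+1)^2 + (m+1)) := by
    rw [Uq, Finset.sum_range_succ' _ (m+1)]
    congr 1
    rw [if_pos (by omega : 2*0 ≤ m+1)]
    norm_num [gaussBinom_zero]
  have C2 : PowerSeries.X ^ (2*m+2) * Uq m = (∑ j ∈ Finset.range (m+1),
      PowerSeries.X ^ (2*m+2) * (if 2*(j+1) ≤ m then PowerSeries.X ^ ((m-(j+1))^2 + (j+1)^2 + (m+(j+1))) * gaussBinom m (2*(j+1)) else 0))
      + PowerSeries.X ^ ((m+1)^2 + (m+1)) := by
    conv_rhs => rw [Finset.sum_range_succ, if_neg (by omega : ¬ 2*(m+1) ≤ m), mul_zero, add_zero]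
    rw [Uq, Finset.sum_range_succ' _ m]
    have h00 : (if 2*0 ≤ m then PowerSeries.X ^ ((m-0)^2 + 0^2 + (m+0)) * gaussBinom m (2*0) else (0:PowerSeries ℤ)) = PowerSeries.X ^ (m^2+m) := by
      rw [if_pos (by omega : 2*0 ≤ m)]
      norm_num [gaussBinom_zero]
    rw [h00, mul_add, Finset.mul_sum, T]
  have C3 : PowerSeries.X ^ (2*m+2) * Sq m = (∑ j ∈ Finset.range (m+1),
      PowerSeries.X ^ (2*m+2) * (if 2*j+1 ≤ m then PowerSeries.X ^ ((m-(j+1))^2 + (j+1)^2 + (m-(j+1))) * gaussBinom m (2*j+1) else 0)) := by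
    rw [Sq_eq m, Finset.mul_sum]
  rw [mul_add, C1, C2, C3, Finset.sum_congr rfl expand, Finset.sum_add_distrib]
  ring

lemma pochA_succ (m : ℕ) :
    pochA (m+1) = pochA m * (1 - PowerSeries.X * PowerSeries.C (R := PowerSeries ℤ) (PowerSeries.X ^ (2*m+2))) := by
  rw [pochA, Finset.prod_range_succ, ← pochA]

lemma isUnit_pochA (m : ℕ) : IsUnit (pochA m) := by
  rw [PowerSeries.isUnit_iff_constantCoeff]
  have : constantCoeff (R := PowerSeries ℤ) (pochA m) = 1 := by
    rw [pochA, map_prod]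
    apply Finset.prod_eq_one
    intro j _
    simp
  rw [this]; exact isUnit_one

lemma rescale_C' (a b : PowerSeries ℤ) :
    PowerSeries.rescale a (PowerSeries.C (R := PowerSeries ℤ) b) = PowerSeries.C (R := PowerSeries ℤ) b := by
  ext n
  rw [PowerSeries.coeff_rescale]
  cases n with
  | zero => simp
  | succ k => simp [PowerSeries.coeff_C]

lemma pochA_succ' (m : ℕ) :
    pochA (m+1) = (1 - PowerSeries.X * PowerSeries.C (R := PowerSeries ℤ) (PowerSeries.X ^ 2)) *
      PowerSeries.rescale (PowerSeries.X ^ 2) (pochA m) := by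
  rw [pochA, Finset.prod_range_succ' ]
  rw [pochA, map_prod]
  have h0 : (1 - PowerSeries.X * PowerSeries.C (R := PowerSeries ℤ) (PowerSeries.X ^ (2*0+2)))
      = (1 - PowerSeries.X * PowerSeries.C (R := PowerSeries ℤ) (PowerSeries.X ^ 2)) := by norm_num
  rw [h0, mul_comm]
  congr 1
  apply Finset.prod_congr rfl
  intro j _
  rw [map_sub, map_one, map_mul, PowerSeries.rescale_X, rescale_C']
  have : PowerSeries.C (R := PowerSeries ℤ) (PowerSeries.X ^ 2) * PowerSeries.X * PowerSeries.C (R := PowerSeries ℤ) (PowerSeries.X ^ (2*j+2))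
      = PowerSeries.X * PowerSeries.C (R := PowerSeries ℤ) (PowerSeries.X ^ (2*(j+1)+2)) := by
    rw [mul_comm (PowerSeries.C (R := PowerSeries ℤ) (PowerSeries.X ^ 2)) PowerSeries.X, mul_assoc, ← map_mul, ← pow_add]
    congr 2
    ring
  rw [this]

noncomputable def cJ (j m : ℕ) : PowerSeries ℤ :=
  PowerSeries.coeff (R := PowerSeries ℤ) j (Ring.inverse (pochA m))

lemma cJ_zero (m : ℕ) : cJ 0 m = 1 := by
  have h := Ring.mul_inverse_cancel _ (isUnit_pochA m)
  have h2 := congrArg (PowerSeries.constantCoeff (R := PowerSeries ℤ)) h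
  rw [map_mul, map_one] at h2
  have h3 : constantCoeff (R := PowerSeries ℤ) (pochA m) = 1 := by
    rw [pochA, map_prod]
    apply Finset.prod_eq_one
    intro j _
    simp
  rw [h3, one_mul] at h2
  rw [cJ, PowerSeries.coeff_zero_eq_constantCoeff, h2]

lemma cJ_succ_zero (j : ℕ) : cJ (j+1) 0 = 0 := by
  have h : pochA 0 = 1 := by rw [pochA, Finset.range_zero, Finset.prod_empty]
  rw [cJ, h, Ring.inverse_one]
  simp [PowerSeries.coeff_one]

lemma inv_pochA_rel1 (m : ℕ) :
    (1 - PowerSeries.X * PowerSeries.C (R := PowerSeries ℤ) (PowerSeries.X ^ (2*m+2))) * Ring.inverse (pochA (m+1))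
      = Ring.inverse (pochA m) := by
  apply (isUnit_pochA (m+1)).mul_left_cancel
  calc pochA (m+1) * ((1 - PowerSeries.X * PowerSeries.C (R := PowerSeries ℤ) (PowerSeries.X ^ (2*m+2))) * Ring.inverse (pochA (m+1)))
      = (1 - PowerSeries.X * PowerSeries.C (R := PowerSeries ℤ) (PowerSeries.X ^ (2*m+2))) * (pochA (m+1) * Ring.inverse (pochA (m+1))) := by ring
    _ = (1 - PowerSeries.X * PowerSeries.C (R := PowerSeries ℤ) (PowerSeries.X ^ (2*m+2))) := by
        rw [Ring.mul_inverse_cancel _ (isUnit_pochA (m+1)), mul_one]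
    _ = (1 - PowerSeries.X * PowerSeries.C (R := PowerSeries ℤ) (PowerSeries.X ^ (2*m+2))) * (pochA m * Ring.inverse (pochA m)) := by
        rw [Ring.mul_inverse_cancel _ (isUnit_pochA m), mul_one]
    _ = pochA (m+1) * Ring.inverse (pochA m) := by rw [pochA_succ]; ring

lemma inv_pochA_rel2 (m : ℕ) :
    (1 - PowerSeries.X * PowerSeries.C (R := PowerSeries ℤ) (PowerSeries.X ^ 2)) * Ring.inverse (pochA (m+1))
      = PowerSeries.rescale (PowerSeries.X ^ 2) (Ring.inverse (pochA m)) := by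
  apply (isUnit_pochA (m+1)).mul_left_cancel
  calc pochA (m+1) * ((1 - PowerSeries.X * PowerSeries.C (R := PowerSeries ℤ) (PowerSeries.X ^ 2)) * Ring.inverse (pochA (m+1)))
      = (1 - PowerSeries.X * PowerSeries.C (R := PowerSeries ℤ) (PowerSeries.X ^ 2)) * (pochA (m+1) * Ring.inverse (pochA (m+1))) := by ring
    _ = (1 - PowerSeries.X * PowerSeries.C (R := PowerSeries ℤ) (PowerSeries.X ^ 2)) := by
        rw [Ring.mul_inverse_cancel _ (isUnit_pochA (m+1)), mul_one]
    _ = (1 - PowerSeries.X * PowerSeries.C (R := PowerSeries ℤ) (PowerSeries.X ^ 2)) *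
          (PowerSeries.rescale (PowerSeries.X ^ 2) (pochA m) * PowerSeries.rescale (PowerSeries.X ^ 2) (Ring.inverse (pochA m))) := by
        rw [← map_mul, Ring.mul_inverse_cancel _ (isUnit_pochA m), map_one, mul_one]
    _ = pochA (m+1) * PowerSeries.rescale (PowerSeries.X ^ 2) (Ring.inverse (pochA m)) := by
        rw [pochA_succ']; ring

lemma cJ_rel1 (j m : ℕ) :
    cJ (j+1) (m+1) = cJ (j+1) m + PowerSeries.X ^ (2*m+2) * cJ j (m+1) := by
  have h := congrArg (PowerSeries.coeff (R := PowerSeries ℤ) (j+1)) (inv_pochA_rel1 m)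
  rw [sub_mul, one_mul, map_sub, mul_assoc, PowerSeries.coeff_succ_X_mul, PowerSeries.coeff_C_mul] at h
  rw [← cJ, ← cJ, ← cJ] at h
  linear_combination h

lemma cJ_rel2 (j m : ℕ) :
    cJ (j+1) (m+1) = PowerSeries.X ^ 2 * cJ j (m+1) + PowerSeries.X ^ (2*(j+1)) * cJ (j+1) m := by
  have h := congrArg (PowerSeries.coeff (R := PowerSeries ℤ) (j+1)) (inv_pochA_rel2 m)
  rw [sub_mul, one_mul, map_sub, mul_assoc, PowerSeries.coeff_succ_X_mul, PowerSeries.coeff_C_mul,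
    PowerSeries.coeff_rescale, ← pow_mul] at h
  rw [← cJ, ← cJ, ← cJ] at h
  have e : 2*(j+1) = 2*(j+1) := rfl
  have e2 : (2:ℕ)*(j+1) = 2*(j+1) := rfl
  linear_combination h

noncomputable def gS (e : ℕ) : PowerSeries ℤ :=
  ∑ m ∈ Finset.range (e+1), (-1:PowerSeries ℤ)^m * (Sq m * cJ (e-m) m)

noncomputable def hU (e : ℕ) : PowerSeries ℤ :=
  ∑ m ∈ Finset.range (e+1), (-1:PowerSeries ℤ)^m * (Uq m * cJ (e-m) m)

noncomputable def pU (e : ℕ) : PowerSeries ℤ :=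
  ∑ n ∈ Finset.range (e+1), (-1:PowerSeries ℤ)^n * (PowerSeries.X^(2*n) * (Uq n * cJ (e-n) (n+1)))

noncomputable def rS (e : ℕ) : PowerSeries ℤ :=
  ∑ n ∈ Finset.range (e+1), (-1:PowerSeries ℤ)^n * (PowerSeries.X^(2*n) * (Sq n * cJ (e-n) (n+1)))

noncomputable def hhat (e : ℕ) : PowerSeries ℤ :=
  ∑ n ∈ Finset.range (e+1), (-1:PowerSeries ℤ)^n * (Uq n * cJ (e-n) (n+1))

lemma sum_split {N : ℕ} (f g h : ℕ → PowerSeries ℤ)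
    (hfg : ∀ n ∈ Finset.range N, f n = g n + h n) :
    ∑ n ∈ Finset.range N, f n = ∑ n ∈ Finset.range N, g n + ∑ n ∈ Finset.range N, h n := by
  rw [Finset.sum_congr rfl hfg, Finset.sum_add_distrib]

lemma R1 (e : ℕ) : gS (e+1) = -(PowerSeries.X * (hhat e + rS e)) := by
  rw [gS, Finset.sum_range_succ' ]
  simp only [Nat.succ_sub_succ_eq_sub, Nat.sub_zero]
  rw [Sq_zero]
  have main : ∑ n ∈ Finset.range (e+1), (-1:PowerSeries ℤ)^(n+1) * (Sq (n+1) * cJ (e-n) (n+1))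
      = ∑ n ∈ Finset.range (e+1), (-(PowerSeries.X * ((-1:PowerSeries ℤ)^n * (Uq n * cJ (e-n) (n+1))))
          + -(PowerSeries.X * ((-1:PowerSeries ℤ)^n * (PowerSeries.X^(2*n) * (Sq n * cJ (e-n) (n+1)))))) := by
    apply Finset.sum_congr rfl
    intro n _
    rw [Sq_succ]
    ring
  rw [main, Finset.sum_add_distrib, hhat, rS]
  simp only [Finset.sum_neg_distrib, ← Finset.mul_sum]
  ring

lemma R2 (e : ℕ) : hU (e+1) = -(PowerSeries.X^2 * (pU e + rS e)) := by
  rw [hU, Finset.sum_range_succ' ]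
  simp only [Nat.succ_sub_succ_eq_sub, Nat.sub_zero]
  rw [Uq_zero, cJ_succ_zero]
  have main : ∑ n ∈ Finset.range (e+1), (-1:PowerSeries ℤ)^(n+1) * (Uq (n+1) * cJ (e-n) (n+1))
      = ∑ n ∈ Finset.range (e+1), (-(PowerSeries.X^2 * ((-1:PowerSeries ℤ)^n * (PowerSeries.X^(2*n) * (Uq n * cJ (e-n) (n+1)))))
          + -(PowerSeries.X^2 * ((-1:PowerSeries ℤ)^n * (PowerSeries.X^(2*n) * (Sq n * cJ (e-n) (n+1)))))) := by
    apply Finset.sum_congr rfl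
    intro n _
    rw [Uq_succ]
    ring
  rw [main, Finset.sum_add_distrib, pU, rS]
  simp only [Finset.sum_neg_distrib, ← Finset.mul_sum]
  ring

lemma R3 (e : ℕ) : hhat (e+1) = hU (e+1) + PowerSeries.X^2 * pU e := by
  have A : hhat (e+1) = (∑ n ∈ Finset.range (e+1), (-1:PowerSeries ℤ)^n * (Uq n * cJ ((e-n)+1) (n+1)))
      + (-1:PowerSeries ℤ)^(e+1) * (Uq (e+1) * cJ 0 (e+2)) := by
    rw [hhat, Finset.sum_range_succ, Nat.sub_self]
    congr 1
    apply Finset.sum_congr rfl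
    intro n hn
    have : e+1-n = (e-n)+1 := by
      have := Finset.mem_range.mp hn; omega
    rw [this]
  have B : hU (e+1) = (∑ n ∈ Finset.range (e+1), (-1:PowerSeries ℤ)^n * (Uq n * cJ ((e-n)+1) n))
      + (-1:PowerSeries ℤ)^(e+1) * (Uq (e+1) * cJ 0 (e+1)) := by
    rw [hU, Finset.sum_range_succ, Nat.sub_self]
    congr 1
    apply Finset.sum_congr rfl
    intro n hn
    have : e+1-n = (e-n)+1 := by
      have := Finset.mem_range.mp hn; omega
    rw [this]
  rw [A, B, cJ_zero, cJ_zero]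
  have main : ∑ n ∈ Finset.range (e+1), (-1:PowerSeries ℤ)^n * (Uq n * cJ ((e-n)+1) (n+1))
      = ∑ n ∈ Finset.range (e+1), ((-1:PowerSeries ℤ)^n * (Uq n * cJ ((e-n)+1) n)
          + PowerSeries.X^2 * ((-1:PowerSeries ℤ)^n * (PowerSeries.X^(2*n) * (Uq n * cJ (e-n) (n+1))))) := by
    apply Finset.sum_congr rfl
    intro n _
    rw [cJ_rel1 (e-n) n]
    have h2 : 2*n+2 = 2+2*n := by ring
    rw [h2, pow_add]
    ring
  rw [main, Finset.sum_add_distrib, pU]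
  simp only [← Finset.mul_sum]
  ring

lemma R4 (e : ℕ) : pU (e+1) = PowerSeries.X^2 * pU e + PowerSeries.X^(2*(e+1)) * hU (e+1) := by
  have A : pU (e+1) = (∑ n ∈ Finset.range (e+1), (-1:PowerSeries ℤ)^n * (PowerSeries.X^(2*n) * (Uq n * cJ ((e-n)+1) (n+1))))
      + (-1:PowerSeries ℤ)^(e+1) * (PowerSeries.X^(2*(e+1)) * (Uq (e+1) * cJ 0 (e+2))) := by
    rw [pU, Finset.sum_range_succ, Nat.sub_self]
    congr 1
    apply Finset.sum_congr rfl
    intro n hn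
    have : e+1-n = (e-n)+1 := by
      have := Finset.mem_range.mp hn; omega
    rw [this]
  have B : hU (e+1) = (∑ n ∈ Finset.range (e+1), (-1:PowerSeries ℤ)^n * (Uq n * cJ ((e-n)+1) n))
      + (-1:PowerSeries ℤ)^(e+1) * (Uq (e+1) * cJ 0 (e+1)) := by
    rw [hU, Finset.sum_range_succ, Nat.sub_self]
    congr 1
    apply Finset.sum_congr rfl
    intro n hn
    have : e+1-n = (e-n)+1 := by
      have := Finset.mem_range.mp hn; omega
    rw [this]
  rw [A, B, cJ_zero, cJ_zero]
  have main : ∑ n ∈ Finset.range (e+1), (-1:PowerSeries ℤ)^n * (PowerSeries.X^(2*n) * (Uq n * cJ ((e-n)+1) (n+1)))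
      = ∑ n ∈ Finset.range (e+1), (PowerSeries.X^2 * ((-1:PowerSeries ℤ)^n * (PowerSeries.X^(2*n) * (Uq n * cJ (e-n) (n+1))))
          + PowerSeries.X^(2*(e+1)) * ((-1:PowerSeries ℤ)^n * (Uq n * cJ ((e-n)+1) n))) := by
    apply Finset.sum_congr rfl
    intro n hn
    rw [cJ_rel2 (e-n) n]
    have hn' : n ≤ e := by
      have := Finset.mem_range.mp hn; omega
    have h2 : 2*((e-n)+1) = 2*(e+1) - 2*n := by omega
    have h3 : PowerSeries.X^(2*n) * (PowerSeries.X ^ (2*((e-n)+1))) = (PowerSeries.X:PowerSeries ℤ)^(2*(e+1)) := by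
      rw [← pow_add]
      congr 1
      omega
    calc (-1:PowerSeries ℤ)^n * (PowerSeries.X^(2*n) * (Uq n * (PowerSeries.X ^ 2 * cJ (e-n) (n+1) + PowerSeries.X ^ (2*((e-n)+1)) * cJ ((e-n)+1) n)))
        = PowerSeries.X^2 * ((-1:PowerSeries ℤ)^n * (PowerSeries.X^(2*n) * (Uq n * cJ (e-n) (n+1))))
          + (PowerSeries.X^(2*n) * PowerSeries.X ^ (2*((e-n)+1))) * ((-1:PowerSeries ℤ)^n * (Uq n * cJ ((e-n)+1) n)) := by ring
      _ = _ := by rw [h3]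
  rw [main, Finset.sum_add_distrib, pU]
  simp only [← Finset.mul_sum]
  ring

lemma R5 (e : ℕ) : rS (e+1) = PowerSeries.X^2 * rS e + PowerSeries.X^(2*(e+1)) * gS (e+1) := by
  have A : rS (e+1) = (∑ n ∈ Finset.range (e+1), (-1:PowerSeries ℤ)^n * (PowerSeries.X^(2*n) * (Sq n * cJ ((e-n)+1) (n+1))))
      + (-1:PowerSeries ℤ)^(e+1) * (PowerSeries.X^(2*(e+1)) * (Sq (e+1) * cJ 0 (e+2))) := by
    rw [rS, Finset.sum_range_succ, Nat.sub_self]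
    congr 1
    apply Finset.sum_congr rfl
    intro n hn
    have : e+1-n = (e-n)+1 := by
      have := Finset.mem_range.mp hn; omega
    rw [this]
  have B : gS (e+1) = (∑ n ∈ Finset.range (e+1), (-1:PowerSeries ℤ)^n * (Sq n * cJ ((e-n)+1) n))
      + (-1:PowerSeries ℤ)^(e+1) * (Sq (e+1) * cJ 0 (e+1)) := by
    rw [gS, Finset.sum_range_succ, Nat.sub_self]
    congr 1
    apply Finset.sum_congr rfl
    intro n hn
    have : e+1-n = (e-n)+1 := by
      have := Finset.mem_range.mp hn; omega
    rw [this]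
  rw [A, B, cJ_zero, cJ_zero]
  have main : ∑ n ∈ Finset.range (e+1), (-1:PowerSeries ℤ)^n * (PowerSeries.X^(2*n) * (Sq n * cJ ((e-n)+1) (n+1)))
      = ∑ n ∈ Finset.range (e+1), (PowerSeries.X^2 * ((-1:PowerSeries ℤ)^n * (PowerSeries.X^(2*n) * (Sq n * cJ (e-n) (n+1))))
          + PowerSeries.X^(2*(e+1)) * ((-1:PowerSeries ℤ)^n * (Sq n * cJ ((e-n)+1) n))) := by
    apply Finset.sum_congr rfl
    intro n hn
    rw [cJ_rel2 (e-n) n]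
    have hn' : n ≤ e := by
      have := Finset.mem_range.mp hn; omega
    have h3 : PowerSeries.X^(2*n) * (PowerSeries.X ^ (2*((e-n)+1))) = (PowerSeries.X:PowerSeries ℤ)^(2*(e+1)) := by
      rw [← pow_add]
      congr 1
      omega
    calc (-1:PowerSeries ℤ)^n * (PowerSeries.X^(2*n) * (Sq n * (PowerSeries.X ^ 2 * cJ (e-n) (n+1) + PowerSeries.X ^ (2*((e-n)+1)) * cJ ((e-n)+1) n)))
        = PowerSeries.X^2 * ((-1:PowerSeries ℤ)^n * (PowerSeries.X^(2*n) * (Sq n * cJ (e-n) (n+1))))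
          + (PowerSeries.X^(2*n) * PowerSeries.X ^ (2*((e-n)+1))) * ((-1:PowerSeries ℤ)^n * (Sq n * cJ ((e-n)+1) n)) := by ring
      _ = _ := by rw [h3]
  rw [main, Finset.sum_add_distrib, rS]
  simp only [← Finset.mul_sum]
  ring

lemma gS_zero : gS 0 = 0 := by simp [gS, Sq_zero]
lemma rS_zero : rS 0 = 0 := by simp [rS, Sq_zero]
lemma hhat_zero : hhat 0 = 1 := by simp [hhat, Uq_zero, cJ_zero]

lemma key_comb (e : ℕ) : hhat (e+1) + rS (e+1) = PowerSeries.X^(2*(e+1)) * gS (e+1) := by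
  rw [R3, R5, R2]
  ring

lemma gS_one : gS 1 = -PowerSeries.X := by
  rw [R1, hhat_zero, rS_zero]
  ring

lemma gS_closed : ∀ e : ℕ, gS (e+1) = (-1:PowerSeries ℤ)^(e+1) * PowerSeries.X^((e+1)^2) := by
  intro e
  induction e with
  | zero => rw [gS_one]; ring
  | succ n ih =>
      rw [R1, key_comb, ih]
      ring

lemma inner_sum_eq {m e : ℕ} (h : m ≤ e) :
    ∑ k ∈ Finset.range (e+1),
      (if 1 ≤ k ∧ 2*k-1 ≤ m then
        PowerSeries.X ^ ((m-k)^2 + k^2 + (m-k)) * gaussBinom m (2*k-1) else 0) = Sq m := by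
  rw [Sq]
  apply (Finset.sum_subset (Finset.range_subset_range.mpr (by omega)) ?_).symm
  intro k hk hk'
  have h1 : m + 1 ≤ k := by
    have := Finset.mem_range.mp hk
    have h2 := Finset.mem_range.not.mp hk'
    omega
  rw [if_neg (by omega)]

lemma negX_pow_C (m : ℕ) (P : PowerSeries ℤ) :
    (-(PowerSeries.X : Aq))^m * PowerSeries.C (R := PowerSeries ℤ) P
      = PowerSeries.C (R := PowerSeries ℤ) ((-1:PowerSeries ℤ)^m * P) * PowerSeries.X^m := by
  rw [neg_pow]
  have h : ((-1 : Aq))^m = PowerSeries.C (R := PowerSeries ℤ) ((-1:PowerSeries ℤ)^m) := by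
    rw [map_pow, map_neg, map_one]
  rw [map_mul, h]
  ring

lemma coeff_term {e m : ℕ} (hm : m ≤ e) (P : PowerSeries ℤ) :
    PowerSeries.coeff (R := PowerSeries ℤ) e
        ((-(PowerSeries.X : Aq))^m * PowerSeries.C (R := PowerSeries ℤ) P * Ring.inverse (pochA m))
      = (-1:PowerSeries ℤ)^m * (P * cJ (e-m) m) := by
  rw [negX_pow_C, mul_assoc, PowerSeries.coeff_C_mul, mul_assoc]
  rw [PowerSeries.coeff_X_pow_mul', if_pos hm, ← cJ]

lemma coeff_LHS (e : ℕ) :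
    PowerSeries.coeff (R := PowerSeries ℤ) e
        (∑ m ∈ Finset.range (e + 1), ∑ k ∈ Finset.range (e + 1),
          if 1 ≤ k ∧ 2 * k - 1 ≤ m then
            (-(PowerSeries.X : Aq)) ^ m *
              PowerSeries.C (R := PowerSeries ℤ)
                (PowerSeries.X ^ ((m - k) ^ 2 + k ^ 2 + (m - k)) * gaussBinom m (2 * k - 1)) *
              Ring.inverse (pochA m)
          else 0)
      = gS e := by
  rw [map_sum, gS]
  apply Finset.sum_congr rfl
  intro m hm
  have hm' : m ≤ e := by
    have := Finset.mem_range.mp hm; omega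
  rw [map_sum]
  have step : ∀ k ∈ Finset.range (e+1),
      PowerSeries.coeff (R := PowerSeries ℤ) e
        (if 1 ≤ k ∧ 2 * k - 1 ≤ m then
          (-(PowerSeries.X : Aq)) ^ m *
            PowerSeries.C (R := PowerSeries ℤ)
              (PowerSeries.X ^ ((m - k) ^ 2 + k ^ 2 + (m - k)) * gaussBinom m (2 * k - 1)) *
            Ring.inverse (pochA m)
        else 0)
      = ((-1:PowerSeries ℤ)^m * cJ (e-m) m) *
          (if 1 ≤ k ∧ 2*k-1 ≤ m then
            PowerSeries.X ^ ((m-k)^2 + k^2 + (m-k)) * gaussBinom m (2*k-1) else 0) := by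
    intro k _
    by_cases hc : 1 ≤ k ∧ 2*k-1 ≤ m
    · rw [if_pos hc, if_pos hc, coeff_term hm']
      ring
    · rw [if_neg hc, if_neg hc, map_zero, mul_zero]
  rw [Finset.sum_congr rfl step, ← Finset.mul_sum, inner_sum_eq hm']
  ring

lemma coeff_RHS (e : ℕ) :
    PowerSeries.coeff (R := PowerSeries ℤ) e
        (∑ n ∈ Finset.range (e + 1),
          if 1 ≤ n then
            (-(PowerSeries.X : Aq)) ^ n * PowerSeries.C (R := PowerSeries ℤ) (PowerSeries.X ^ (n ^ 2))
          else 0)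
      = if 1 ≤ e then (-1:PowerSeries ℤ)^e * PowerSeries.X^(e^2) else 0 := by
  rw [map_sum]
  rw [Finset.sum_eq_single e]
  · by_cases he : 1 ≤ e
    · rw [if_pos he, if_pos he, negX_pow_C]
      have := PowerSeries.coeff_mul_X_pow (PowerSeries.C (R := PowerSeries ℤ) ((-1:PowerSeries ℤ)^e * PowerSeries.X^(e^2))) e 0
      rw [zero_add] at this
      rw [this, PowerSeries.coeff_zero_eq_constantCoeff, PowerSeries.constantCoeff_C]
    · rw [if_neg he, if_neg he, map_zero]
  · intro b hb hbe
    by_cases hbpos : 1 ≤ b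
    · rw [if_pos hbpos, negX_pow_C, PowerSeries.coeff_mul_X_pow']
      have hble : b ≤ e := by
        have := Finset.mem_range.mp hb; omega
      rw [if_pos hble, PowerSeries.coeff_C, if_neg (by omega)]
    · rw [if_neg hbpos, map_zero]
  · intro habs
    exact absurd (Finset.self_mem_range_succ e) habs

/-- Andrews' identity with parameter `a` (Theorem, eq. (1.5)):
`∑_{m,k≥0} (-a)^m q^{(m-k)^2+k^2+m-k}/(aq^2;q^2)_m · [m choose 2k-1]_q
  = ∑_{n≥1} (-a)^n q^{n^2}` in `ℤ[[a,q]]`, where `[m choose 2k-1]_q = 0` if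
`2k-1 < 0` or `2k-1 > m`.  Stated coefficientwise in `a`: the `(m,k)` summand
has `a`-order at least `m`, so the coefficient of `a^e` involves only `m ≤ e`. -/
theorem andrews_q9_param :
    ∀ e : ℕ,
      PowerSeries.coeff (R := PowerSeries ℤ) e
        (∑ m ∈ Finset.range (e + 1), ∑ k ∈ Finset.range (e + 1),
          if 1 ≤ k ∧ 2 * k - 1 ≤ m then
            (-(PowerSeries.X : Aq)) ^ m *
              PowerSeries.C (R := PowerSeries ℤ)
                (PowerSeries.X ^ ((m - k) ^ 2 + k ^ 2 + (m - k)) * gaussBinom m (2 * k - 1)) *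
              Ring.inverse (pochA m)
          else 0)
      =
      PowerSeries.coeff (R := PowerSeries ℤ) e
        (∑ n ∈ Finset.range (e + 1),
          if 1 ≤ n then
            (-(PowerSeries.X : Aq)) ^ n * PowerSeries.C (R := PowerSeries ℤ) (PowerSeries.X ^ (n ^ 2))
          else 0) := by
  intro e
  rw [coeff_LHS, coeff_RHS]
  cases e with
  | zero => rw [gS_zero, if_neg (by omega)]
  | succ n => rw [gS_closed n, if_pos (by omega)]
end

section
/- With F_n(a,q) defined as the signed weighted count ∑_{m,k≥0} (-1)^m a^n ∑_{(τ,λ,μ)∈P_{n,m,k}} q^{|τ|+|λ|+|μ|} (with P_{n,m,k} as for Andrews' Question 9), F_1(a,q) = -aq and consequently F_n(a,q) = (-a)^n q^{n^2} for all n ≥ 1. -/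
open PowerSeries Finset

/-- The size of the one-part partition `τ = ((m-k)^2 + k^2 + m - k)`. -/
def tauP (m k : ℕ) : ℕ := (m - k) ^ 2 + k ^ 2 + (m - k)

/-- Number of partitions of `s` with at most `2k-1` parts, each part at most `m-2k+1`
(conditions read in `ℤ`, so this is `0` for `k = 0`). -/
noncomputable def lamCount (m k s : ℕ) : ℕ :=
  Nat.card {p : Nat.Partition s //
    (p.parts.card : ℤ) ≤ 2 * k - 1 ∧ ∀ x ∈ p.parts, (x : ℤ) ≤ (m : ℤ) - 2 * k + 1}

/-- Number of partitions of `s` with exactly `n - m` parts (read in `ℤ`), all parts even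
and at most `2m`. -/
noncomputable def muCount (n m s : ℕ) : ℕ :=
  Nat.card {p : Nat.Partition s //
    (p.parts.card : ℤ) = (n : ℤ) - m ∧ ∀ x ∈ p.parts, Even x ∧ x ≤ 2 * m}

/-- The generating function `∑_{(τ,λ,μ) ∈ P_{n,m,k}} q^{|τ|+|λ|+|μ|}` of the set
`P_{n,m,k}` of triples `(τ,λ,μ)`: `τ` is the single part `(m-k)^2+k^2+m-k`, `λ` has at
most `2k-1` parts each at most `m-2k+1`, and `μ` has exactly `n-m` even parts each at most
`2m`; `P_{n,m,k} = ∅` when `m = k = 0`, `2k-1 > m` or `m > n` (the first and third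
conditions are enforced by the `ℤ`-read conditions on `λ` and `μ`). -/
noncomputable def pgf (n m k : ℕ) : PowerSeries ℤ :=
  PowerSeries.mk fun d =>
    if 2 * (k : ℤ) - 1 ≤ m ∧ tauP m k ≤ d then
      ∑ s ∈ Finset.HasAntidiagonal.antidiagonal (d - tauP m k), (lamCount m k s.1 : ℤ) * muCount n m s.2
    else 0

/-- `F_n(a,q) = ∑_{m,k≥0} (-1)^m a^n ∑_{(τ,λ,μ)∈P_{n,m,k}} q^{|τ|+|λ|+|μ|}` as an
element of `ℤ[[q]][[a]]`; all summands with `m > n` or `k > n` vanish. -/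
noncomputable def Fgf (n : ℕ) : Aq :=
  (PowerSeries.X : Aq) ^ n *
    PowerSeries.C (R := PowerSeries ℤ)
      (∑ m ∈ Finset.range (n + 1), ∑ k ∈ Finset.range (n + 1),
        (-1 : PowerSeries ℤ) ^ m * pgf n m k)

noncomputable section GBAux

abbrev Rz : Type := PowerSeries ℤ

/-- Gaussian binomial in base `x`, defined by the lower Pascal rule. -/
def gb (x : Rz) : ℕ → ℕ → Rz
  | 0, 0 => 1
  | 0, _ + 1 => 0
  | _ + 1, 0 => 1
  | n + 1, t + 1 => gb x n t + x ^ (t + 1) * gb x n (t + 1)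

variable (x : Rz)

@[simp] lemma gb_zero_right (n : ℕ) : gb x n 0 = 1 := by cases n <;> rfl

lemma gb_pascal (n t : ℕ) :
    gb x (n + 1) (t + 1) = gb x n t + x ^ (t + 1) * gb x n (t + 1) := rfl

lemma gb_eq_zero {n t : ℕ} (h : n < t) : gb x n t = 0 := by
  induction n generalizing t with
  | zero => cases t with
    | zero => omega
    | succ s => rfl
  | succ n ih =>
    cases t with
    | zero => omega
    | succ s =>
      rw [gb_pascal, ih (by omega), ih (by omega)]
      ring

@[simp] lemma gb_diag (n : ℕ) : gb x n n = 1 := by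
  induction n with
  | zero => rfl
  | succ n ih => rw [gb_pascal, ih, gb_eq_zero x (by omega)]; ring

lemma gb_geom (n : ℕ) : (1 - x) * gb x n 1 = 1 - x ^ n := by
  induction n with
  | zero => simp [gb_eq_zero x (by omega : (0:ℕ) < 1)]
  | succ n ih =>
    have : gb x (n+1) 1 = 1 + x * gb x n 1 := by
      rw [gb_pascal]; simp [pow_one]
    rw [this, mul_add, mul_one]
    have : (1 - x) * (x * gb x n 1) = x * ((1 - x) * gb x n 1) := by ring
    rw [this, ih]
    ring

lemma gb_cogeom (n : ℕ) : (1 - x) * gb x (n + 1) n = 1 - x ^ (n + 1) := by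
  induction n with
  | zero => simp
  | succ n ih =>
    rw [gb_pascal, gb_diag, mul_add, ih]
    ring

/-- Absorption identity. -/
lemma gb_absorb : ∀ n t : ℕ, 1 ≤ t → t ≤ n →
    (1 - x ^ t) * gb x n t = (1 - x ^ (n + 1 - t)) * gb x n (t - 1) := by
  intro n
  induction n with
  | zero => intro t h1 h2; omega
  | succ n ih =>
    intro t h1 h2
    rcases Nat.eq_or_lt_of_le h1 with h1' | h1'
    · -- t = 1
      have ht : t = 1 := h1'.symm
      subst ht
      simpa using gb_geom x (n+1)
    · -- 2 ≤ t
      rcases Nat.eq_or_lt_of_le h2 with h2' | h2'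
      · -- t = n + 1
        subst h2'
        rw [gb_diag, mul_one, Nat.add_sub_cancel, show n + 1 + 1 - (n+1) = 1 by omega,
          pow_one]
        exact (gb_cogeom x n).symm
      · -- 2 ≤ t ≤ n
        have ht : ∃ s, t = s + 1 := ⟨t - 1, by omega⟩
        obtain ⟨s, rfl⟩ := ht
        have hs1 : 1 ≤ s := by omega
        have hsn : s + 1 ≤ n := by omega
        -- LHS
        have hL : (1 - x ^ (s+1)) * gb x (n+1) (s+1) = (1 - x ^ (n+1)) * gb x n s := by
          rw [gb_pascal, mul_add]
          have h2 : (1 - x^(s+1)) * (x^(s+1) * gb x n (s+1)) =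
              x^(s+1) * ((1 - x^(s+1)) * gb x n (s+1)) := by ring
          rw [h2, ih (s+1) (by omega) hsn]
          have h3 : n + 1 - (s+1) = n - s := by omega
          rw [h3, Nat.add_sub_cancel]
          have h4 : x^(s+1) * x^(n-s) = x^(n+1) := by
            rw [← pow_add]; congr 1; omega
          calc (1 - x^(s+1)) * gb x n s + x^(s+1) * ((1 - x^(n-s)) * gb x n s)
              = (1 - x^(s+1) + (x^(s+1) - x^(s+1) * x^(n-s))) * gb x n s := by ring
            _ = (1 - x^(n+1)) * gb x n s := by rw [h4]; ring
        have hR : (1 - x ^ (n + 1 + 1 - (s+1))) * gb x (n+1) (s+1-1) =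
            (1 - x ^ (n+1)) * gb x n s := by
          have h3 : n + 1 + 1 - (s + 1) = n + 1 - s := by omega
          simp only [Nat.add_sub_cancel, h3]
          have hs' : ∃ u, s = u + 1 := ⟨s - 1, by omega⟩
          obtain ⟨u, rfl⟩ := hs'
          rw [gb_pascal, mul_add]
          have ihs := ih (u+1) (by omega) (by omega)
          have h5 : n + 1 - (u+1) = n - u := by omega
          rw [h5] at ihs ⊢
          -- (1-x^{n-u}) * gb n u = ((1-x^{u+1}) * gb n (u+1)) by ihs.symm
          have h6 : (1 - x^(n-u)) * gb x n u = (1 - x^(u+1)) * gb x n (u+1) := by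
            simpa using ihs.symm
          calc (1 - x^(n-u)) * gb x n u + (1-x^(n-u)) * (x^(u+1) * gb x n (u+1))
              = (1 - x^(u+1)) * gb x n (u+1) + (1-x^(n-u)) * (x^(u+1) * gb x n (u+1)) := by
                rw [h6]
            _ = (1 - x^(u+1) * x^(n-u)) * gb x n (u+1) := by ring
            _ = (1 - x^(n+1)) * gb x n (u+1) := by
                rw [← pow_add, show u + 1 + (n-u) = n+1 by omega]
        rw [hL, hR]

/-- Upper Pascal rule. -/
lemma gb_pascal_upper (n t : ℕ) :
    gb x (n + 1) (t + 1) = gb x n (t + 1) + x ^ (n - t) * gb x n t := by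
  rcases lt_or_ge t n with h | h
  · -- t + 1 ≤ n
    rw [gb_pascal]
    ·
      have habs := gb_absorb x n (t+1) (by omega) (by omega)
      simp only [Nat.add_sub_cancel] at habs
      have h3 : n + 1 - (t+1) = n - t := by omega
      rw [h3] at habs
      -- habs : (1 - x^{t+1}) gb n (t+1) = (1 - x^{n-t}) gb n t
      have := sub_eq_zero.mpr habs
      have hgoal : gb x n t + x ^ (t + 1) * gb x n (t + 1) -
          (gb x n (t + 1) + x ^ (n - t) * gb x n t) =
          (1 - x^(n-t)) * gb x n t - (1 - x^(t+1)) * gb x n (t+1) := by ring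
      have h0 : gb x n t + x ^ (t + 1) * gb x n (t + 1) -
          (gb x n (t + 1) + x ^ (n - t) * gb x n t) = 0 := by
        rw [hgoal, habs]; ring
      linear_combination h0
  · rcases Nat.eq_or_lt_of_le h with h' | h'
    · subst h'
      rw [gb_diag, gb_eq_zero x (show n < n + 1 by omega), gb_diag, Nat.sub_self, pow_zero]
      ring
    · rw [gb_eq_zero x (by omega), gb_eq_zero x (by omega), gb_eq_zero x (by omega)]
      ring

/-- Symmetry. -/
lemma gb_symm : ∀ n t : ℕ, t ≤ n → gb x n t = gb x n (n - t) := by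
  intro n
  induction n with
  | zero => intro t h; interval_cases t; simp
  | succ n ih =>
    intro t h
    cases t with
    | zero => simp [Nat.sub_zero, gb_diag]
    | succ s =>
      rcases Nat.eq_or_lt_of_le h with h' | h'
      · have hsn : s = n := by omega
        subst hsn
        simp [Nat.sub_self, gb_diag]
      · -- s + 1 ≤ n
        have hsn : s + 1 ≤ n := by omega
        rw [gb_pascal]
        have h1 : gb x n s = gb x n (n - s) := ih s (by omega)
        have h2 : gb x n (s+1) = gb x n (n - (s+1)) := ih (s+1) hsn
        rw [h1, h2]
        have h3 : n + 1 - (s + 1) = (n - (s+1)) + 1 := by omega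
        rw [h3, gb_pascal]
        have h4 : n - (s+1) + 1 = n - s := by omega
        rw [h4]
        -- goal: gb n (n-s) + x^{s+1} gb n (n-s-1+1=n-s... )
        -- goal: gb x n (n-s) + x^(s+1) * gb x n (n-(s+1)) = gb x n (n-(s+1)) + x^(n-s) * gb x n (n-s)
        have habs := gb_absorb x n (n - s) (by omega) (by omega)
        have h5 : n + 1 - (n - s) = s + 1 := by omega
        have h6 : n - s - 1 = n - (s+1) := by omega
        rw [h5, h6] at habs
        -- habs : (1 - x^{n-s}) * gb n (n-s) = (1 - x^{s+1}) * gb n (n-(s+1))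
        linear_combination habs

/-- triangular-type exponent: `sig t = t*(t-1)/2`. -/
def sig : ℕ → ℕ
  | 0 => 0
  | t + 1 => sig t + t

/-- `nprod t = ∏_{i=1}^t (1 + X^i)`. -/
def nprod (t : ℕ) : Rz := ∏ i ∈ Finset.range t, (1 + (X : Rz) ^ (i + 1))

@[simp] lemma nprod_zero : nprod 0 = 1 := by simp [nprod]

lemma nprod_succ (t : ℕ) : nprod (t + 1) = nprod t * (1 + (X : Rz) ^ (t + 1)) := by
  simp [nprod, Finset.prod_range_succ]

/-- the summand of the key alternating sum. -/
def Tterm (N t : ℕ) : Rz := (-1) ^ t * X ^ sig t * nprod t * gb ((X : Rz) ^ 2) N t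

/-- the key alternating sum. -/
def Tsum (N : ℕ) : Rz := ∑ t ∈ Finset.range (N + 1), Tterm N t

/-- the telescoping certificate. -/
def Gcert (N : ℕ) : ℕ → Rz
  | 0 => 0
  | j + 1 => (-1) ^ j * X ^ sig (j + 1) * (1 + (X : Rz) ^ (2 * N + 2 - (j + 1))) *
      nprod j * gb ((X : Rz) ^ 2) N j

lemma certificate (N t : ℕ) (ht : t ≤ N + 1) :
    Tterm (N + 1) t + X ^ (2 * N + 1) * Tterm N t = Gcert N (t + 1) - Gcert N t := by
  cases t with
  | zero =>
    simp only [Tterm, Gcert, sig, pow_zero, nprod_zero, gb_zero_right]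
    rw [show 2 * N + 2 - 1 = 2 * N + 1 by omega]
    ring
  | succ j =>
    have hj : j ≤ N := by omega
    simp only [Tterm, Gcert, sig, nprod_succ]
    rw [gb_pascal]
    rcases Nat.eq_or_lt_of_le hj with h' | h'
    · -- j = N : gb (X^2) N (j+1) = 0
      subst h'
      rw [gb_eq_zero _ (show j < j + 1 by omega)]
      rw [show 2 * j + 2 - (j + 1 + 1) = j by omega,
        show 2 * j + 2 - (j + 1) = j + 1 by omega, gb_diag]
      ring
    · -- j + 1 ≤ N
      have habs := gb_absorb ((X:Rz)^2) N (j+1) (by omega) (by omega)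
      simp only [Nat.add_sub_cancel] at habs
      rw [show 2 * N + 2 - (j + 1 + 1) = 2 * N - 2 * j + j by omega,
        show 2 * N + 2 - (j + 1) = 2 * N - 2 * j + (j + 1) by omega,
        show 2 * N + 1 = 2 * N - 2 * j + (2 * j + 1) by omega]
      have e2 : ((X:Rz) ^ 2) ^ (N + 1 - (j+1)) = X ^ (2 * N - 2 * j) := by
        rw [← pow_mul]; congr 1; omega
      rw [e2] at habs
      -- habs : (1 - (X^2)^(j+1)) * gb (X^2) N (j+1) = (1 - X^(2N-2j)) * gb (X^2) N j
      linear_combination ((-1)^j * (X:Rz) ^ (sig j + j) * X ^ (j+1) * nprod j) * habs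

lemma Tterm_top (N : ℕ) : Tterm N (N + 1) = 0 := by
  simp [Tterm, gb_eq_zero _ (show N < N + 1 by omega)]

lemma Tsum_succ (N : ℕ) : Tsum (N + 1) = -X ^ (2 * N + 1) * Tsum N := by
  have h1 : ∑ t ∈ Finset.range (N + 2), (Gcert N (t + 1) - Gcert N t) =
      Gcert N (N + 2) - Gcert N 0 := Finset.sum_range_sub (Gcert N) (N + 2)
  have h2 : ∀ t ∈ Finset.range (N + 2),
      Tterm (N + 1) t + X ^ (2 * N + 1) * Tterm N t = Gcert N (t + 1) - Gcert N t := by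
    intro t htm
    exact certificate N t (by simp at htm; omega)
  have h3 : Gcert N (N + 2) = 0 := by
    simp [Gcert, gb_eq_zero _ (show N < N + 1 by omega)]
  have h4 : ∑ t ∈ Finset.range (N + 2), (Tterm (N + 1) t + X ^ (2 * N + 1) * Tterm N t) = 0 := by
    rw [Finset.sum_congr rfl h2, h1, h3]; simp [Gcert]
  rw [Finset.sum_add_distrib, ← Finset.mul_sum] at h4
  have h5 : ∑ t ∈ Finset.range (N + 2), Tterm N t = Tsum N := by
    rw [Finset.sum_range_succ, Tterm_top, add_zero]; rfl
  rw [h5] at h4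
  have : Tsum (N + 1) = ∑ t ∈ Finset.range (N + 2), Tterm (N+1) t := rfl
  rw [this]
  linear_combination h4

lemma Tsum_closed (N : ℕ) : Tsum N = (-1) ^ N * X ^ (N ^ 2) := by
  induction N with
  | zero => simp [Tsum, Tterm, sig]
  | succ N ih =>
    rw [Tsum_succ, ih]
    have : (N + 1) ^ 2 = N ^ 2 + (2 * N + 1) := by ring
    rw [this, pow_add, pow_succ]
    ring

/-! ### the inner k-sum -/

/-- summand of the inner `k`-sum, with `k = j+1`. -/
def Sterm (m j : ℕ) : Rz := X ^ tauP m (j + 1) * gb X m (2 * j + 1)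

def Ssum (m : ℕ) : Rz := ∑ j ∈ Finset.range m, Sterm m j

lemma tau_step {M j : ℕ} (h : j ≤ M) :
    tauP (M + 1) (j + 1) = tauP M (j + 1) + 2 * (M - j) := by
  obtain ⟨c, rfl⟩ := Nat.exists_eq_add_of_le h
  cases c with
  | zero => simp [tauP]
  | succ c =>
    simp only [tauP]
    rw [show j + (c+1) + 1 - (j + 1) = c + 1 by omega,
      show j + (c+1) - (j+1) = c by omega,
      show j + (c+1) - j = c + 1 by omega]
    ring

lemma tau_shift {M i : ℕ} (h : 2 * i + 2 ≤ M) :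
    tauP M (i + 2) + 2 * (M - (i+1)) + (M - (2*i+2)) = tauP M (i + 1) + M + 1 := by
  obtain ⟨c, rfl⟩ := Nat.exists_eq_add_of_le h
  simp only [tauP]
  rw [show 2*i+2+c - (i+2) = i + c by omega,
    show 2*i+2+c - (i+1) = i + c + 1 by omega,
    show 2*i+2+c - (2*i+2) = c by omega]
  ring

/-- `ctr` and `psi` pieces. -/
def ctrT (M j : ℕ) : Rz := X ^ (tauP M (j+1) + 2 * (M - j)) * gb X (M - 1) (2 * j)
def psiT (M i : ℕ) : Rz := X ^ (tauP M (i+1) + M + 1) * gb X (M - 1) (2 * i + 1)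

lemma C1 {M : ℕ} (hM : 1 ≤ M) (i : ℕ) :
    X ^ (tauP M (i+1) + (M + 1)) * gb X M (2 * i + 1) = ctrT M i + psiT M i := by
  obtain ⟨M, rfl⟩ : ∃ M', M = M' + 1 := ⟨M - 1, by omega⟩
  have hup := gb_pascal_upper (X : Rz) M (2 * i)
  -- hup : gb X (M+1) (2i+1) = gb X M (2i+1) + X^(M - 2i) * gb X M (2i)
  rw [ctrT, psiT, Nat.add_sub_cancel, hup]
  rcases le_or_gt (2 * i) M with hc | hc
  · have he : tauP (M+1) (i+1) + (M + 1 + 1) + (M - 2*i) =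
        tauP (M+1) (i+1) + 2 * (M + 1 - i) := by omega
    rw [mul_add, ← mul_assoc, ← pow_add, he]
    ring
  · rw [gb_eq_zero (X:Rz) (show M < 2*i by omega),
      gb_eq_zero (X:Rz) (show M < 2*i+1 by omega)]
    ring

lemma C2 {M : ℕ} (hM : 1 ≤ M) (i : ℕ) :
    X ^ (tauP M (i+2) + 2 * (M - (i+1))) * gb X M (2 * (i+1)) = ctrT M (i+1) + psiT M i := by
  obtain ⟨M, rfl⟩ : ∃ M', M = M' + 1 := ⟨M - 1, by omega⟩
  have hup := gb_pascal_upper (X : Rz) M (2 * i + 1)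
  -- hup : gb X (M+1) (2i+2) = gb X M (2i+2) + X^(M - (2i+1)) * gb X M (2i+1)
  rw [ctrT, psiT, Nat.add_sub_cancel]
  rw [show 2 * (i + 1) = (2 * i + 1) + 1 by ring, hup,
    show (2*i+1)+1 = 2*(i+1) by ring]
  rcases le_or_gt (2 * i + 2) (M + 1) with hc | hc
  · have he : tauP (M+1) (i+2) + 2 * (M + 1 - (i+1)) + (M - (2*i+1)) =
        tauP (M+1) (i+1) + (M + 1) + 1 := by
      have := tau_shift (M := M + 1) (i := i) (by omega)
      omega
    rw [mul_add, ← mul_assoc, ← pow_add, he]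
  · rw [gb_eq_zero (X:Rz) (show M < 2*i+1 by omega),
      gb_eq_zero (X:Rz) (show M < 2*(i+1) by omega)]
    ring

lemma Ssum_succ {M : ℕ} (hM : 1 ≤ M) :
    Ssum (M + 1) = (X ^ (M+1) + X ^ (2*M+1)) * Ssum M := by
  have hterm : ∀ j ∈ Finset.range (M + 1),
      Sterm (M+1) j = X ^ (tauP M (j+1) + 2 * (M - j)) * gb X M (2*j)
        + X ^ (2*M+1) * (X ^ tauP M (j+1) * gb X M (2*j+1)) := by
    intro j hj
    simp only [Finset.mem_range] at hj
    have hjM : j ≤ M := by omega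
    rw [Sterm, tau_step hjM, gb_pascal, mul_add]
    congr 1
    rw [← mul_assoc, ← pow_add, ← mul_assoc, ← pow_add]
    congr 2
    omega
  have hsplit : Ssum (M+1) =
      (∑ j ∈ Finset.range (M+1), X ^ (tauP M (j+1) + 2 * (M - j)) * gb X M (2*j))
      + X ^ (2*M+1) * ∑ j ∈ Finset.range (M+1), (X ^ tauP M (j+1) * gb X M (2*j+1)) := by
    rw [Ssum, Finset.sum_congr rfl hterm, Finset.sum_add_distrib, Finset.mul_sum]
  -- second sum is Ssum M (top term vanishes)
  have h2 : ∑ j ∈ Finset.range (M+1), (X ^ tauP M (j+1) * gb X M (2*j+1)) = Ssum M := by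
    rw [Finset.sum_range_succ, gb_eq_zero (X:Rz) (show M < 2*M+1 by omega)]
    simp [Ssum, Sterm]
  -- first sum Y = X^{M+1} Ssum M
  have hY : (∑ j ∈ Finset.range (M+1), X ^ (tauP M (j+1) + 2 * (M - j)) * gb X M (2*j))
      = X ^ (M+1) * Ssum M := by
    rw [Finset.sum_range_succ']
    have hz : X ^ (tauP M (0+1) + 2 * (M - 0)) * gb X M (2*0) = ctrT M 0 := by
      rw [ctrT]
      simp
    rw [hz, Finset.sum_congr rfl (fun i hi => C2 hM i)]
    have hrhs : X ^ (M+1) * Ssum M =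
        ∑ i ∈ Finset.range M, (ctrT M i + psiT M i) := by
      rw [Ssum, Finset.mul_sum, Finset.sum_congr rfl]
      intro i hi
      rw [Sterm, ← mul_assoc, ← pow_add]
      rw [show M + 1 + tauP M (i+1) = tauP M (i+1) + (M+1) by omega]
      exact C1 hM i
    rw [hrhs, Finset.sum_add_distrib, Finset.sum_add_distrib]
    have hctr : ∑ i ∈ Finset.range M, ctrT M (i+1) + ctrT M 0 =
        ∑ i ∈ Finset.range M, ctrT M i + ctrT M M := by
      rw [← Finset.sum_range_succ', Finset.sum_range_succ]
    have hctrM : ctrT M M = 0 := by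
      rw [ctrT, gb_eq_zero (X:Rz) (show M - 1 < 2*M by omega)]
      ring
    linear_combination hctr + hctrM
  rw [hsplit, h2, hY]
  ring

lemma Ssum_one : Ssum 1 = X := by
  simp [Ssum, Sterm, tauP, gb_diag]

lemma Ssum_closed {m : ℕ} (hm : 1 ≤ m) : Ssum m = X ^ sig (m+1) * nprod (m-1) := by
  induction m with
  | zero => omega
  | succ M ih =>
    rcases Nat.eq_or_lt_of_le hm with h | h
    · rw [← h, Ssum_one]
      norm_num [sig]
    · have hM : 1 ≤ M := by omega
      obtain ⟨c, rfl⟩ : ∃ c, M = c + 1 := ⟨M - 1, by omega⟩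
      rw [Ssum_succ hM, ih hM]
      simp only [Nat.add_sub_cancel]
      rw [nprod_succ]
      have hs : sig (c + 1 + 1 + 1) = sig (c + 1 + 1) + (c + 2) := rfl
      rw [hs, show 2 * (c+1) + 1 = (c+2)+(c+1) by ring, pow_add, pow_add, pow_add]
      ring

/-! ### Counting partitions in a box -/

/-- number of partitions of `s` with at most `a` parts, each at most `b`. -/
def boxCount (a b s : ℕ) : ℕ :=
  Nat.card {p : s.Partition // p.parts.card ≤ a ∧ ∀ x ∈ p.parts, x ≤ b}

lemma mem_le_sum {s : Multiset ℕ} {x : ℕ} (h : x ∈ s) : x ≤ s.sum := by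
  rw [← Multiset.cons_erase h, Multiset.sum_cons]
  exact Nat.le_add_right _ _

lemma partition_zero_parts (p : Nat.Partition 0) : p.parts = 0 := by
  rw [Multiset.eq_zero_iff_forall_notMem]
  intro x hx
  have h1 := p.parts_pos hx
  have h2 := mem_le_sum hx
  rw [p.parts_sum] at h2
  omega

/-- the empty partition of `0`. -/
def emptyPartition : Nat.Partition 0 :=
  ⟨0, by simp, by simp⟩

lemma boxCount_s_zero (a b : ℕ) : boxCount a b 0 = 1 := by
  rw [boxCount]
  haveI : Unique {p : Nat.Partition 0 // p.parts.card ≤ a ∧ ∀ x ∈ p.parts, x ≤ b} := by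
    refine ⟨⟨⟨emptyPartition, by simp [emptyPartition]⟩⟩, ?_⟩
    rintro ⟨p, hp⟩
    have := partition_zero_parts p
    apply Subtype.ext
    apply Nat.Partition.ext
    simp [this, emptyPartition]
  exact Nat.card_unique

lemma boxCount_a_zero (b s : ℕ) (hs : s ≠ 0) : boxCount 0 b s = 0 := by
  rw [boxCount]
  haveI : IsEmpty {p : s.Partition // p.parts.card ≤ 0 ∧ ∀ x ∈ p.parts, x ≤ b} := by
    constructor
    rintro ⟨p, hc, _⟩
    have hp : p.parts = 0 := by
      rwa [← Multiset.card_eq_zero, ← Nat.le_zero]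
    have := p.parts_sum
    rw [hp] at this
    simp at this
    exact hs this.symm
  exact Nat.card_of_isEmpty

lemma boxCount_b_zero (a s : ℕ) (hs : s ≠ 0) : boxCount a 0 s = 0 := by
  rw [boxCount]
  haveI : IsEmpty {p : s.Partition // p.parts.card ≤ a ∧ ∀ x ∈ p.parts, x ≤ 0} := by
    constructor
    rintro ⟨p, _, hb⟩
    have hp : p.parts = 0 := by
      rw [Multiset.eq_zero_iff_forall_notMem]
      intro x hx
      have := p.parts_pos hx
      have := hb x hx
      omega
    have := p.parts_sum
    rw [hp] at this
    simp at this
    exact hs this.symm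
  exact Nat.card_of_isEmpty

/-- split a subtype count along a decidable predicate. -/
lemma natcard_split {α : Type*} [Fintype α] (P Q : α → Prop)
    [DecidablePred P] [DecidablePred Q] :
    Nat.card {x // P x} = Nat.card {x // P x ∧ Q x} + Nat.card {x // P x ∧ ¬Q x} := by
  classical
  simp only [Nat.card_eq_fintype_card, Fintype.card_subtype]
  rw [← Finset.card_filter_add_card_filter_not (s := Finset.univ.filter P) (p := Q)]
  rw [Finset.filter_filter, Finset.filter_filter]

lemma boxCount_rec (a b s : ℕ) :
    boxCount (a+1) (b+1) s = boxCount (a+1) b s +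
      (if b + 1 ≤ s then boxCount a (b+1) (s - (b+1)) else 0) := by
  classical
  rw [boxCount,
    natcard_split (fun p : s.Partition => p.parts.card ≤ a + 1 ∧ ∀ x ∈ p.parts, x ≤ b + 1)
      (fun p => (b+1) ∈ p.parts)]
  have h1 : Nat.card {p : s.Partition //
      (p.parts.card ≤ a + 1 ∧ ∀ x ∈ p.parts, x ≤ b + 1) ∧ ¬ (b+1) ∈ p.parts} =
      boxCount (a+1) b s := by
    rw [boxCount]
    apply Nat.card_congr
    apply Equiv.subtypeEquivRight
    intro p
    constructor
    · rintro ⟨⟨hc, hub⟩, hm⟩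
      refine ⟨hc, fun x hx => ?_⟩
      have := hub x hx
      rcases Nat.eq_or_lt_of_le this with h | h
      · exact absurd (h ▸ hx) hm
      · omega
    · rintro ⟨hc, hub⟩
      refine ⟨⟨hc, fun x hx => le_trans (hub x hx) (by omega)⟩, fun hm => ?_⟩
      have := hub _ hm
      omega
  have h2 : Nat.card {p : s.Partition //
      (p.parts.card ≤ a + 1 ∧ ∀ x ∈ p.parts, x ≤ b + 1) ∧ (b+1) ∈ p.parts} =
      if b + 1 ≤ s then boxCount a (b+1) (s - (b+1)) else 0 := by
    split_ifs with hbs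
    · rw [boxCount]
      apply Nat.card_congr
      refine ⟨fun ⟨p, hp⟩ => ⟨⟨p.parts.erase (b+1), ?_, ?_⟩, ?_, ?_⟩,
        fun ⟨q, hq⟩ => ⟨⟨(b+1) ::ₘ q.parts, ?_, ?_⟩, ⟨⟨?_, ?_⟩, ?_⟩⟩, ?_, ?_⟩
      · intro i hi
        exact p.parts_pos (Multiset.mem_of_mem_erase hi)
      · have hcons := Multiset.cons_erase hp.2
        have : ((b+1) ::ₘ p.parts.erase (b+1)).sum = s := by rw [hcons, p.parts_sum]
        rw [Multiset.sum_cons] at this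
        omega
      · have hcard := Multiset.card_erase_of_mem hp.2
        have hpos : 0 < Multiset.card p.parts := Multiset.card_pos_iff_exists_mem.mpr ⟨_, hp.2⟩
        have := hp.1.1
        simp only [hcard, Nat.pred_eq_sub_one]
        omega
      · intro x hx
        exact hp.1.2 x (Multiset.mem_of_mem_erase hx)
      · intro i hi
        rcases Multiset.mem_cons.mp hi with h | h
        · omega
        · exact q.parts_pos h
      · rw [Multiset.sum_cons, q.parts_sum]
        omega
      · rw [Multiset.card_cons]
        have := hq.1
        omega
      · intro x hx
        rcases Multiset.mem_cons.mp hx with h | h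
        · omega
        · exact hq.2 x h
      · exact Multiset.mem_cons_self _ _
      · rintro ⟨p, hp⟩
        apply Subtype.ext
        apply Nat.Partition.ext
        simp only
        exact Multiset.cons_erase hp.2
      · rintro ⟨q, hq⟩
        apply Subtype.ext
        apply Nat.Partition.ext
        simp only
        exact Multiset.erase_cons_head _ _
    · rw [Nat.card_eq_zero]
      left
      constructor
      rintro ⟨p, hp⟩
      have := mem_le_sum hp.2
      rw [p.parts_sum] at this
      omega
  rw [h1, h2]
  omega

/-! ### The box generating function equals the Gaussian binomial -/

/-- `w`-dilated generating function of box partition counts. -/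
def gbox (w a b : ℕ) : Rz :=
  PowerSeries.mk fun d => if w ∣ d then (boxCount a b (d / w) : ℤ) else 0

lemma gbox_b_zero (w a : ℕ) (hw : 0 < w) : gbox w a 0 = 1 := by
  ext d
  rw [gbox, coeff_mk, PowerSeries.coeff_one]
  by_cases hd : d = 0
  · subst hd
    simp [boxCount_s_zero]
  · rw [if_neg hd]
    by_cases h1 : w ∣ d
    · rw [if_pos h1, boxCount_b_zero]
      · simp
      · have := Nat.le_of_dvd (by omega) h1
        have := Nat.div_pos this hw
        omega
    · rw [if_neg h1]

lemma gbox_a_zero (w b : ℕ) (hw : 0 < w) : gbox w 0 b = 1 := by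
  ext d
  rw [gbox, coeff_mk, PowerSeries.coeff_one]
  by_cases hd : d = 0
  · subst hd
    simp [boxCount_s_zero]
  · rw [if_neg hd]
    by_cases h1 : w ∣ d
    · rw [if_pos h1, boxCount_a_zero]
      · simp
      · have := Nat.le_of_dvd (by omega) h1
        have := Nat.div_pos this hw
        omega
    · rw [if_neg h1]

lemma gbox_eq (w : ℕ) (hw : 0 < w) : ∀ a b, gbox w a b = gb ((X : Rz) ^ w) (a + b) b := by
  intro a
  induction a with
  | zero =>
    intro b
    rw [gbox_a_zero w b hw, Nat.zero_add, gb_diag]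
  | succ a iha =>
    intro b
    induction b with
    | zero => rw [gbox_b_zero w _ hw, gb_zero_right]
    | succ b ihb =>
      have hpas : gb ((X : Rz) ^ w) (a + 1 + (b + 1)) (b + 1)
          = gb ((X:Rz)^w) (a + 1 + b) b + ((X:Rz)^w) ^ (b+1) * gb ((X:Rz)^w) (a + (b+1)) (b+1) := by
        rw [show a + 1 + (b + 1) = (a + 1 + b) + 1 by omega, gb_pascal,
          show a + 1 + b = a + (b+1) by omega]
      rw [hpas, ← iha, ← ihb, ← pow_mul]
      ext d
      simp only [gbox, coeff_mk, map_add, PowerSeries.coeff_X_pow_mul']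
      by_cases h1 : w ∣ d
      · obtain ⟨e, rfl⟩ := h1
        have hdvd0 : w ∣ w * e := dvd_mul_right w e
        rw [if_pos hdvd0, if_pos hdvd0, Nat.mul_div_cancel_left _ hw, boxCount_rec]
        push_cast
        congr 1
        by_cases h2 : b + 1 ≤ e
        · rw [if_pos h2, if_pos (Nat.mul_le_mul_left w h2)]
          have hsub : w * e - w * (b+1) = w * (e - (b+1)) := (Nat.mul_sub w e (b+1)).symm
          rw [hsub, if_pos (dvd_mul_right w _), Nat.mul_div_cancel_left _ hw]
        · rw [if_neg h2, if_neg (fun hle => h2 (Nat.le_of_mul_le_mul_left hle hw))]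
      · rw [if_neg h1, if_neg h1, zero_add]
        by_cases h2 : w * (b+1) ≤ d
        · rw [if_pos h2, if_neg, eq_comm]
          intro hdvd
          have := Nat.dvd_add hdvd (dvd_mul_right w (b+1))
          rw [Nat.sub_add_cancel h2] at this
          exact h1 this
        · rw [if_neg h2]


/-! ### identification of `lamCount` and `muCount` -/

lemma lamCount_k_zero (m s : ℕ) : lamCount m 0 s = 0 := by
  rw [lamCount]
  haveI : IsEmpty {p : s.Partition //
      (p.parts.card : ℤ) ≤ 2 * (0:ℕ) - 1 ∧ ∀ x ∈ p.parts, (x : ℤ) ≤ (m : ℤ) - 2 * (0:ℕ) + 1} := by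
    constructor
    rintro ⟨p, h1, _⟩
    push_cast at h1
    omega
  exact Nat.card_of_isEmpty

lemma lamCount_eq (m k s : ℕ) (hk : 1 ≤ k) (hkm : 2 * k - 1 ≤ m) :
    lamCount m k s = boxCount (2 * k - 1) (m + 1 - 2 * k) s := by
  rw [lamCount, boxCount]
  apply Nat.card_congr
  apply Equiv.subtypeEquivRight
  intro p
  constructor
  · rintro ⟨h1, h2⟩
    refine ⟨by omega, fun x hx => ?_⟩
    have := h2 x hx
    omega
  · rintro ⟨h1, h2⟩
    refine ⟨by push_cast; omega, fun x hx => ?_⟩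
    have := h2 x hx
    push_cast
    omega

/-- number of partitions of `u` with exactly `r` parts, all at most `c`. -/
def exCount (r c u : ℕ) : ℕ :=
  Nat.card {p : u.Partition // p.parts.card = r ∧ ∀ x ∈ p.parts, x ≤ c}

lemma exCount_zero (c u : ℕ) : exCount 0 c u = boxCount 0 c u := by
  rw [exCount, boxCount]
  apply Nat.card_congr
  apply Equiv.subtypeEquivRight
  intro p
  constructor
  · rintro ⟨h1, h2⟩; exact ⟨by omega, h2⟩
  · rintro ⟨h1, h2⟩; exact ⟨by omega, h2⟩

lemma boxCount_split (r c u : ℕ) :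
    boxCount (r + 1) c u = boxCount r c u + exCount (r + 1) c u := by
  classical
  rw [boxCount,
    natcard_split (fun p : u.Partition => p.parts.card ≤ r + 1 ∧ ∀ x ∈ p.parts, x ≤ c)
      (fun p => p.parts.card ≤ r)]
  congr 1
  · rw [boxCount]
    apply Nat.card_congr
    apply Equiv.subtypeEquivRight
    intro p
    constructor
    · rintro ⟨⟨_, h2⟩, h3⟩; exact ⟨h3, h2⟩
    · rintro ⟨h1, h2⟩; exact ⟨⟨by omega, h2⟩, h1⟩
  · rw [exCount]
    apply Nat.card_congr
    apply Equiv.subtypeEquivRight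
    intro p
    constructor
    · rintro ⟨⟨h1, h2⟩, h3⟩; exact ⟨by omega, h2⟩
    · rintro ⟨h1, h2⟩; exact ⟨⟨by omega, h2⟩, by omega⟩

lemma sum_eq_two_mul_half (l : Multiset ℕ) (h : ∀ x ∈ l, 2 ∣ x) :
    l.sum = 2 * (l.map (· / 2)).sum := by
  have h1 : l.map (fun x => 2 * (x / 2)) = l.map id := by
    apply Multiset.map_congr rfl
    intro x hx
    exact Nat.mul_div_cancel' (h x hx)
  calc l.sum = (l.map id).sum := by rw [Multiset.map_id]
    _ = (l.map (fun x => 2 * (x / 2))).sum := by rw [h1]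
    _ = 2 * (l.map (· / 2)).sum := by
        rw [← Multiset.sum_map_mul_left]

lemma muCount_gt (n m s : ℕ) (h : n < m) : muCount n m s = 0 := by
  rw [muCount]
  haveI : IsEmpty {p : s.Partition //
      (p.parts.card : ℤ) = (n : ℤ) - m ∧ ∀ x ∈ p.parts, Even x ∧ x ≤ 2 * m} := by
    constructor
    rintro ⟨p, h1, _⟩
    omega
  exact Nat.card_of_isEmpty

lemma muCount_eq (n m s : ℕ) (hmn : m ≤ n) :
    muCount n m s = if 2 ∣ s then exCount (n - m) m (s / 2) else 0 := by
  split_ifs with h2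
  · rw [muCount, exCount]
    apply Nat.card_congr
    refine ⟨fun ⟨p, hp⟩ => ⟨⟨p.parts.map (· / 2), ?_, ?_⟩, ?_, ?_⟩,
      fun ⟨q, hq⟩ => ⟨⟨q.parts.map (fun x => 2 * x), ?_, ?_⟩, ?_, ?_⟩, ?_, ?_⟩
    · intro i hi
      obtain ⟨x, hx, rfl⟩ := Multiset.mem_map.mp hi
      have hpos := p.parts_pos hx
      have heven := (hp.2 x hx).1
      rcases heven with ⟨y, hy⟩
      omega
    · have hev : ∀ x ∈ p.parts, 2 ∣ x := by
        intro x hx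
        rcases (hp.2 x hx).1 with ⟨y, hy⟩
        omega
      have := sum_eq_two_mul_half p.parts hev
      rw [p.parts_sum] at this
      omega
    · rw [Multiset.card_map]
      have := hp.1
      omega
    · intro x hx
      obtain ⟨y, hy, rfl⟩ := Multiset.mem_map.mp hx
      have := (hp.2 y hy).2
      omega
    · intro i hi
      obtain ⟨x, hx, rfl⟩ := Multiset.mem_map.mp hi
      have := q.parts_pos hx
      omega
    · have h4 : (q.parts.map (fun x => 2 * x)).sum = 2 * (q.parts.map (fun x => x)).sum :=
        Multiset.sum_map_mul_left
      have h5 : q.parts.map (fun x => x) = q.parts := Multiset.map_id' _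
      rw [h4, h5, q.parts_sum]
      omega
    · rw [Multiset.card_map]
      have := hq.1
      push_cast
      omega
    · intro x hx
      obtain ⟨y, hy, rfl⟩ := Multiset.mem_map.mp hx
      have := hq.2 y hy
      exact ⟨⟨y, by omega⟩, by omega⟩
    · rintro ⟨p, hp⟩
      apply Subtype.ext
      apply Nat.Partition.ext
      simp only [Multiset.map_map]
      have : ∀ x ∈ p.parts, ((fun x => 2 * x) ∘ (· / 2)) x = id x := by
        intro x hx
        rcases (hp.2 x hx).1 with ⟨y, hy⟩
        simp only [Function.comp_apply, id_eq]
        omega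
      rw [Multiset.map_congr rfl this, Multiset.map_id]
    · rintro ⟨q, hq⟩
      apply Subtype.ext
      apply Nat.Partition.ext
      simp only [Multiset.map_map]
      have : ∀ x ∈ q.parts, ((· / 2) ∘ (fun x => 2 * x)) x = id x := by
        intro x _
        simp only [Function.comp_apply, id_eq]
        omega
      rw [Multiset.map_congr rfl this, Multiset.map_id]
  · rw [muCount]
    haveI : IsEmpty {p : s.Partition //
        (p.parts.card : ℤ) = (n : ℤ) - m ∧ ∀ x ∈ p.parts, Even x ∧ x ≤ 2 * m} := by
      constructor
      rintro ⟨p, _, hb⟩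
      have hev : ∀ x ∈ p.parts, 2 ∣ x := by
        intro x hx
        rcases (hb x hx).1 with ⟨y, hy⟩
        omega
      have := sum_eq_two_mul_half p.parts hev
      rw [p.parts_sum] at this
      exact h2 ⟨_, this⟩
    exact Nat.card_of_isEmpty

lemma gbox_one_eq (a b : ℕ) :
    gbox 1 a b = PowerSeries.mk fun s => (boxCount a b s : ℤ) := by
  ext d
  simp [gbox, Nat.div_one]

lemma lam_series (m k : ℕ) (hk : 1 ≤ k) (hkm : 2 * k - 1 ≤ m) :
    (PowerSeries.mk fun s => (lamCount m k s : ℤ)) = gb (X : Rz) m (2 * k - 1) := by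
  have h1 : (PowerSeries.mk fun s => (lamCount m k s : ℤ)) = gbox 1 (2*k-1) (m + 1 - 2*k) := by
    rw [gbox_one_eq]
    ext d
    rw [coeff_mk, coeff_mk, lamCount_eq m k d hk hkm]
  rw [h1, gbox_eq 1 (by omega), pow_one,
    show 2*k-1 + (m+1-2*k) = m by omega]
  have hsym := gb_symm (X : Rz) m (2*k-1) (by omega)
  rw [hsym, show m - (2*k-1) = m + 1 - 2*k by omega]

lemma mu_series (n m : ℕ) (hm : 1 ≤ m) (hmn : m ≤ n) :
    (PowerSeries.mk fun s => (muCount n m s : ℤ)) =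
      X ^ (2 * (n - m)) * gb ((X : Rz) ^ 2) (n - 1) (m - 1) := by
  rcases Nat.eq_or_lt_of_le hmn with h | h
  · -- m = n
    subst h
    have h1 : (PowerSeries.mk fun s => (muCount m m s : ℤ)) = gbox 2 0 m := by
      ext d
      rw [coeff_mk, gbox, coeff_mk, muCount_eq m m d le_rfl, Nat.sub_self, exCount_zero]
      split_ifs <;> simp
    rw [h1, gbox_a_zero 2 m (by omega), Nat.sub_self, pow_zero, one_mul, gb_diag]
  · -- m < n
    obtain ⟨r, hr⟩ : ∃ r, n - m = r + 1 := ⟨n - m - 1, by omega⟩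
    have h1 : (PowerSeries.mk fun s => (muCount n m s : ℤ)) =
        gbox 2 (r+1) m - gbox 2 r m := by
      ext d
      rw [coeff_mk, map_sub, gbox, gbox, coeff_mk, coeff_mk, muCount_eq n m d hmn, hr]
      split_ifs with hdvd
      · have := boxCount_split r m (d / 2)
        push_cast [this]
        ring
      · ring
    rw [h1, gbox_eq 2 (by omega), gbox_eq 2 (by omega), hr,
      show n - 1 = r + 1 + (m - 1) by omega]
    obtain ⟨m', rfl⟩ : ∃ m', m = m' + 1 := ⟨m - 1, by omega⟩
    have hup := gb_pascal_upper ((X:Rz)^2) (r + 1 + m') m'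
    -- gb (r+1+m'+1) (m'+1) = gb (r+1+m') (m'+1) + (X^2)^(r+1+m'-m') * gb (r+1+m') m'
    rw [show r + 1 + (m' + 1) = r + 1 + m' + 1 by omega, hup,
      show r + (m' + 1) = r + 1 + m' by omega,
      show r + 1 + m' - m' = r + 1 by omega]
    rw [Nat.add_sub_cancel, ← pow_mul, show 2 * (r + 1) = (r+1) * 2 by ring]
    ring

/-! ### `pgf` in closed form -/

lemma pgf_k_zero (n m : ℕ) : pgf n m 0 = 0 := by
  ext d
  rw [pgf, coeff_mk, map_zero]
  split_ifs with h
  · apply Finset.sum_eq_zero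
    intro p _
    rw [lamCount_k_zero]
    push_cast
    ring
  · rfl

lemma pgf_big_k (n m k : ℕ) (hk : 1 ≤ k) (h : m < 2 * k - 1) : pgf n m k = 0 := by
  ext d
  rw [pgf, coeff_mk, map_zero, if_neg]
  rintro ⟨h1, -⟩
  omega

lemma pgf_eq (n m k : ℕ) (hk : 1 ≤ k) (hkm : 2 * k - 1 ≤ m) :
    pgf n m k = X ^ tauP m k *
      ((PowerSeries.mk fun s => (lamCount m k s : ℤ)) *
        (PowerSeries.mk fun s => (muCount n m s : ℤ))) := by
  ext d
  rw [pgf, coeff_mk, PowerSeries.coeff_X_pow_mul']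
  have hg : (2 * (k:ℤ) - 1 ≤ m ∧ tauP m k ≤ d) ↔ tauP m k ≤ d := by
    constructor
    · rintro ⟨-, h⟩; exact h
    · intro h; exact ⟨by push_cast; omega, h⟩
  rw [if_congr hg rfl rfl]
  split_ifs with h
  · rw [PowerSeries.coeff_mul]
    apply Finset.sum_congr rfl
    intro p _
    rw [coeff_mk, coeff_mk]
  · rfl

/-! ### assembling the double sum -/

lemma innerKSum (n m : ℕ) (hm1 : 1 ≤ m) (hmn : m ≤ n) :
    ∑ k ∈ Finset.range (n + 1), pgf n m k =
      Ssum m * (X ^ (2 * (n - m)) * gb ((X : Rz) ^ 2) (n - 1) (m - 1)) := by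
  rw [Finset.sum_range_succ', pgf_k_zero, add_zero]
  have hstep : ∀ j, pgf n m (j + 1) =
      Sterm m j * (X ^ (2 * (n - m)) * gb ((X : Rz) ^ 2) (n - 1) (m - 1)) := by
    intro j
    rcases le_or_gt (2 * j + 1) m with hj | hj
    · rw [pgf_eq n m (j+1) (by omega) (by omega),
        lam_series m (j+1) (by omega) (by omega),
        mu_series n m hm1 hmn, Sterm,
        show 2 * (j + 1) - 1 = 2 * j + 1 by omega]
      ring
    · rw [pgf_big_k n m (j+1) (by omega) (by omega), Sterm,
        gb_eq_zero (X : Rz) (show m < 2 * j + 1 by omega)]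
      ring
  rw [Finset.sum_congr rfl (fun j _ => hstep j), ← Finset.sum_mul, Ssum]
  congr 1
  symm
  apply Finset.sum_subset
  · intro j hj
    simp only [Finset.mem_range] at *
    omega
  · intro j hj1 hj2
    simp only [Finset.mem_range] at *
    rw [Sterm, gb_eq_zero (X : Rz) (show m < 2 * j + 1 by omega)]
    ring

lemma Gsum_eq (n : ℕ) (hn : 1 ≤ n) :
    (∑ m ∈ Finset.range (n + 1), ∑ k ∈ Finset.range (n + 1),
      (-1 : PowerSeries ℤ) ^ m * pgf n m k) = (-1) ^ n * X ^ (n ^ 2) := by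
  obtain ⟨N, rfl⟩ : ∃ N, n = N + 1 := ⟨n - 1, by omega⟩
  have hpull : ∀ m ∈ Finset.range (N + 2),
      ∑ k ∈ Finset.range (N + 2), (-1 : PowerSeries ℤ) ^ m * pgf (N+1) m k =
        (-1 : Rz) ^ m * ∑ k ∈ Finset.range (N + 2), pgf (N+1) m k := by
    intro m _
    rw [Finset.mul_sum]
  rw [Finset.sum_congr rfl hpull, Finset.sum_range_succ']
  have hm0 : (-1 : Rz) ^ 0 * ∑ k ∈ Finset.range (N + 2), pgf (N+1) 0 k = 0 := by
    rw [pow_zero, one_mul]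
    apply Finset.sum_eq_zero
    intro k _
    rcases Nat.eq_zero_or_pos k with rfl | hk
    · exact pgf_k_zero _ _
    · exact pgf_big_k _ _ k (by omega) (by omega)
  rw [hm0, add_zero]
  have hterm : ∀ t ∈ Finset.range (N + 1),
      (-1 : Rz) ^ (t + 1) * ∑ k ∈ Finset.range (N + 2), pgf (N+1) (t+1) k =
        -X ^ (2 * N + 1) * Tterm N t := by
    intro t ht
    simp only [Finset.mem_range] at ht
    rw [innerKSum (N+1) (t+1) (by omega) (by omega),
      Ssum_closed (show 1 ≤ t + 1 by omega), Nat.add_sub_cancel, Nat.add_sub_cancel, Tterm]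
    have he : sig (t + 1 + 1) + 2 * (N + 1 - (t + 1)) = sig t + (2 * N + 1) := by
      have h1 : sig (t + 1 + 1) = sig (t + 1) + (t + 1) := rfl
      have h2 : sig (t + 1) = sig t + t := rfl
      omega
    calc (-1 : Rz) ^ (t + 1) * (X ^ sig (t+1+1) * nprod t *
            (X ^ (2 * (N + 1 - (t+1))) * gb ((X:Rz)^2) N t))
        = (-1 : Rz) ^ (t+1) * (X ^ (sig (t+1+1) + 2 * (N + 1 - (t+1))) * nprod t *
            gb ((X:Rz)^2) N t) := by rw [pow_add]; ring
      _ = (-1 : Rz) ^ (t+1) * (X ^ (sig t + (2*N+1)) * nprod t * gb ((X:Rz)^2) N t) := by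
            rw [he]
      _ = -X ^ (2*N+1) * ((-1:Rz)^t * X ^ sig t * nprod t * gb ((X:Rz)^2) N t) := by
            rw [pow_add, pow_succ]; ring
  rw [Finset.sum_congr rfl hterm, ← Finset.mul_sum]
  have : (∑ t ∈ Finset.range (N + 1), Tterm N t) = Tsum N := rfl
  rw [this, Tsum_closed]
  rw [show (N + 1) ^ 2 = N ^ 2 + (2 * N + 1) by ring, pow_add, pow_succ]
  ring

/-- `F_1(a,q) = -aq`, and consequently `F_n(a,q) = (-a)^n q^{n^2}` for all `n ≥ 1`. -/
theorem Fgf_one_and_closed_form :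
    Fgf 1 = -(PowerSeries.X : Aq) * PowerSeries.C (R := PowerSeries ℤ) PowerSeries.X ∧
    ∀ n : ℕ, 1 ≤ n →
      Fgf n =
        (-(PowerSeries.X : Aq)) ^ n *
          PowerSeries.C (R := PowerSeries ℤ) (PowerSeries.X ^ (n ^ 2)) := by
  have main : ∀ n : ℕ, 1 ≤ n →
      Fgf n = (-(PowerSeries.X : Aq)) ^ n *
        PowerSeries.C (R := PowerSeries ℤ) (PowerSeries.X ^ (n ^ 2)) := by
    intro n hn
    rw [Fgf, Gsum_eq n hn, map_mul, map_pow, map_pow, map_neg, map_one, neg_pow]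
    ring
  refine ⟨?_, main⟩
  have h1 := main 1 le_rfl
  rw [h1]
  norm_num
end GBAux
end

section
/- For fixed n ≥ 1, the total signed weight identity from the bijection telescopes: ∑_{m,k≥0} (-1)^m [ p_{n,m,k}(q) + q^{2n-1} p_{n-1,m,k}(q) ] = ∑_{m,k≥0} (-1)^m [ γ_{n,m,k}(q) + η_{n,m,k}(q) + κ_{n,m,k}(q) ] + ∑_{m,k≥0} (-1)^m [ γ_{n,m+1,k}(q) + η_{n,m+1,k}(q) + κ_{n,m+1,k+1}(q) ], and since consecutive m-terms carry opposite signs, ∑_{m,k≥0} (-1)^m p_{n,m,k}(q) = -q^{2n-1} ∑_{m,k≥0} (-1)^m p_{n-1,m,k}(q). -/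
open PowerSeries Finset

/-- Generating function of `G_{n,m,k} = {(τ,λ,μ) ∈ P_{n,m,k} : ℓ(λ) = 2k-1, 2 ∉ μ}`. -/
noncomputable def ggf (n m k : ℕ) : PowerSeries ℤ :=
  PowerSeries.mk fun d =>
    if 2 * (k : ℤ) - 1 ≤ m ∧ tauP m k ≤ d then
      ∑ s ∈ Finset.HasAntidiagonal.antidiagonal (d - tauP m k),
        (Nat.card {p : Nat.Partition s.1 //
            (p.parts.card : ℤ) = 2 * k - 1 ∧ ∀ x ∈ p.parts, (x : ℤ) ≤ (m : ℤ) - 2 * k + 1} : ℤ) *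
        (Nat.card {p : Nat.Partition s.2 //
            ((p.parts.card : ℤ) = (n : ℤ) - m ∧ ∀ x ∈ p.parts, Even x ∧ x ≤ 2 * m) ∧
              2 ∉ p.parts} : ℤ)
    else 0

/-- Generating function of `H_{n,m,k} = {(τ,λ,μ) ∈ P_{n,m,k} : ℓ(λ) = 2k-2, 2m ∉ μ}`. -/
noncomputable def hgf (n m k : ℕ) : PowerSeries ℤ :=
  PowerSeries.mk fun d =>
    if 2 * (k : ℤ) - 1 ≤ m ∧ tauP m k ≤ d then
      ∑ s ∈ Finset.HasAntidiagonal.antidiagonal (d - tauP m k),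
        (Nat.card {p : Nat.Partition s.1 //
            (p.parts.card : ℤ) = 2 * k - 2 ∧ ∀ x ∈ p.parts, (x : ℤ) ≤ (m : ℤ) - 2 * k + 1} : ℤ) *
        (Nat.card {p : Nat.Partition s.2 //
            ((p.parts.card : ℤ) = (n : ℤ) - m ∧ ∀ x ∈ p.parts, Even x ∧ x ≤ 2 * m) ∧
              2 * m ∉ p.parts} : ℤ)
    else 0

/-- Generating function of `K_{n,m,k} = {(τ,λ,μ) ∈ P_{n,m,k} : ℓ(λ) ≤ 2k-3, 2m ∉ μ}`. -/
noncomputable def kgf (n m k : ℕ) : PowerSeries ℤ :=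
  PowerSeries.mk fun d =>
    if 2 * (k : ℤ) - 1 ≤ m ∧ tauP m k ≤ d then
      ∑ s ∈ Finset.HasAntidiagonal.antidiagonal (d - tauP m k),
        (Nat.card {p : Nat.Partition s.1 //
            (p.parts.card : ℤ) ≤ 2 * k - 3 ∧ ∀ x ∈ p.parts, (x : ℤ) ≤ (m : ℤ) - 2 * k + 1} : ℤ) *
        (Nat.card {p : Nat.Partition s.2 //
            ((p.parts.card : ℤ) = (n : ℤ) - m ∧ ∀ x ∈ p.parts, Even x ∧ x ≤ 2 * m) ∧
              2 * m ∉ p.parts} : ℤ)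
    else 0


section Aux

private lemma card_empty_zero {α : Type*} (h : IsEmpty α) : (Nat.card α : ℤ) = 0 := by
  haveI := h
  simp

/-- `kgf` vanishes when `2k - 1 > m` (the `if` condition fails). -/
private lemma kgf_big (n m k : ℕ) (hk : ¬ (2 * (k : ℤ) - 1 ≤ m)) : kgf n m k = 0 := by
  ext d
  simp only [kgf, coeff_mk, map_zero]
  rw [if_neg fun hc => hk hc.1]

/-- `kgf` vanishes at `k = 0` (λ would need at most `-3` parts). -/
private lemma kgf_k0 (n m : ℕ) : kgf n m 0 = 0 := by
  ext d
  simp only [kgf, coeff_mk, map_zero]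
  split
  · refine Finset.sum_eq_zero fun s _ => ?_
    rw [card_empty_zero, zero_mul]
    constructor
    rintro ⟨p, hc, -⟩
    have h0 : (0:ℤ) ≤ (p.parts.card : ℤ) := Int.natCast_nonneg _
    push_cast at hc
    omega
  · rfl

/-- `ggf` vanishes when `m > n` (μ would need a negative number of parts). -/
private lemma ggf_gt (n m k : ℕ) (hm : n < m) : ggf n m k = 0 := by
  ext d
  simp only [ggf, coeff_mk, map_zero]
  split
  · refine Finset.sum_eq_zero fun s _ => ?_
    rw [mul_comm, card_empty_zero, zero_mul]
    constructor
    rintro ⟨p, ⟨hc, -⟩, -⟩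
    have h0 : (0:ℤ) ≤ (p.parts.card : ℤ) := Int.natCast_nonneg _
    have : (n : ℤ) < m := by exact_mod_cast hm
    omega
  · rfl

private lemma hgf_gt (n m k : ℕ) (hm : n < m) : hgf n m k = 0 := by
  ext d
  simp only [hgf, coeff_mk, map_zero]
  split
  · refine Finset.sum_eq_zero fun s _ => ?_
    rw [mul_comm, card_empty_zero, zero_mul]
    constructor
    rintro ⟨p, ⟨hc, -⟩, -⟩
    have h0 : (0:ℤ) ≤ (p.parts.card : ℤ) := Int.natCast_nonneg _
    have : (n : ℤ) < m := by exact_mod_cast hm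
    omega
  · rfl

private lemma kgf_gt (n m k : ℕ) (hm : n < m) : kgf n m k = 0 := by
  ext d
  simp only [kgf, coeff_mk, map_zero]
  split
  · refine Finset.sum_eq_zero fun s _ => ?_
    rw [mul_comm, card_empty_zero, zero_mul]
    constructor
    rintro ⟨p, ⟨hc, -⟩, -⟩
    have h0 : (0:ℤ) ≤ (p.parts.card : ℤ) := Int.natCast_nonneg _
    have : (n : ℤ) < m := by exact_mod_cast hm
    omega
  · rfl

/-- `ggf` vanishes at `m = 0` for every `k`. -/
private lemma ggf_m0 (n k : ℕ) : ggf n 0 k = 0 := by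
  ext d
  simp only [ggf, coeff_mk, map_zero]
  split
  · rename_i hc
    have hk : k = 0 := by
      have := hc.1
      have h0 : (0:ℤ) ≤ (k : ℤ) := Int.natCast_nonneg _
      push_cast at this
      omega
    subst hk
    refine Finset.sum_eq_zero fun s _ => ?_
    rw [card_empty_zero, zero_mul]
    constructor
    rintro ⟨p, hcard, -⟩
    have h0 : (0:ℤ) ≤ (p.parts.card : ℤ) := Int.natCast_nonneg _
    omega
  · rfl

private lemma hgf_m0 (n k : ℕ) : hgf n 0 k = 0 := by
  ext d
  simp only [hgf, coeff_mk, map_zero]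
  split
  · rename_i hc
    have hk : k = 0 := by
      have := hc.1
      have h0 : (0:ℤ) ≤ (k : ℤ) := Int.natCast_nonneg _
      push_cast at this
      omega
    subst hk
    refine Finset.sum_eq_zero fun s _ => ?_
    rw [card_empty_zero, zero_mul]
    constructor
    rintro ⟨p, hcard, -⟩
    have h0 : (0:ℤ) ≤ (p.parts.card : ℤ) := Int.natCast_nonneg _
    omega
  · rfl

private lemma kgf_m0 (n k : ℕ) : kgf n 0 k = 0 := by
  rcases Nat.eq_zero_or_pos k with rfl | hk
  · exact kgf_k0 n 0
  · refine kgf_big n 0 k ?_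
    have : (1:ℤ) ≤ (k : ℤ) := by exact_mod_cast hk
    push_cast
    omega

end Aux

/-- Given the combinatorial telescoping relation, the signed sums telescope: summing
`(-1)^m` times the relation over all `m, k ≥ 0` (all terms with `m > n+1` or `k > n+1`
vanish, so the sums below are complete), the `κ`-terms cancel and the shifted `m+1`-sums
carry the opposite sign, yielding
`∑_{m,k} (-1)^m p_{n,m,k} = -q^{2n-1} ∑_{m,k} (-1)^m p_{n-1,m,k}`. -/
theorem telescoped_sum_P (n : ℕ) (hn : 1 ≤ n)
    (h : ∀ m k : ℕ,
      pgf n m k + PowerSeries.X ^ (2 * n - 1) * pgf (n - 1) m k + kgf n (m + 1) k =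
        ggf n m k + ggf n (m + 1) k + hgf n m k + hgf n (m + 1) k +
          kgf n m k + kgf n (m + 1) (k + 1) + kgf n (m + 1) k) :
    (∑ m ∈ Finset.range (n + 2), ∑ k ∈ Finset.range (n + 2),
        (-1 : PowerSeries ℤ) ^ m *
          (pgf n m k + PowerSeries.X ^ (2 * n - 1) * pgf (n - 1) m k) =
      (∑ m ∈ Finset.range (n + 2), ∑ k ∈ Finset.range (n + 2),
        (-1 : PowerSeries ℤ) ^ m * (ggf n m k + hgf n m k + kgf n m k)) +
      (∑ m ∈ Finset.range (n + 2), ∑ k ∈ Finset.range (n + 2),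
        (-1 : PowerSeries ℤ) ^ m *
          (ggf n (m + 1) k + hgf n (m + 1) k + kgf n (m + 1) (k + 1)))) ∧
    (∑ m ∈ Finset.range (n + 2), ∑ k ∈ Finset.range (n + 2),
        (-1 : PowerSeries ℤ) ^ m * pgf n m k =
      -(PowerSeries.X ^ (2 * n - 1)) *
        ∑ m ∈ Finset.range (n + 2), ∑ k ∈ Finset.range (n + 2),
          (-1 : PowerSeries ℤ) ^ m * pgf (n - 1) m k) := by
  have hterm : ∀ m k : ℕ,
      pgf n m k + PowerSeries.X ^ (2 * n - 1) * pgf (n - 1) m k =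
        ggf n m k + ggf n (m + 1) k + hgf n m k + hgf n (m + 1) k +
          kgf n m k + kgf n (m + 1) (k + 1) := by
    intro m k
    linear_combination h m k
  have h1 : (∑ m ∈ Finset.range (n + 2), ∑ k ∈ Finset.range (n + 2),
        (-1 : PowerSeries ℤ) ^ m *
          (pgf n m k + PowerSeries.X ^ (2 * n - 1) * pgf (n - 1) m k) =
      (∑ m ∈ Finset.range (n + 2), ∑ k ∈ Finset.range (n + 2),
        (-1 : PowerSeries ℤ) ^ m * (ggf n m k + hgf n m k + kgf n m k)) +
      (∑ m ∈ Finset.range (n + 2), ∑ k ∈ Finset.range (n + 2),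
        (-1 : PowerSeries ℤ) ^ m *
          (ggf n (m + 1) k + hgf n (m + 1) k + kgf n (m + 1) (k + 1)))) := by
    rw [← Finset.sum_add_distrib]
    refine Finset.sum_congr rfl fun m _ => ?_
    rw [← Finset.sum_add_distrib]
    refine Finset.sum_congr rfl fun k _ => ?_
    rw [hterm m k]
    ring
  refine ⟨h1, ?_⟩
  -- the κ-shift inside the second sum
  have hsh : ∀ m ∈ Finset.range (n + 2),
      ∑ k ∈ Finset.range (n + 2), kgf n (m + 1) (k + 1) =
        ∑ k ∈ Finset.range (n + 2), kgf n (m + 1) k := by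
    intro m hm
    have hm' := Finset.mem_range.mp hm
    have e1 := Finset.sum_range_succ' (fun k => kgf n (m + 1) k) (n + 2)
    have e2 := Finset.sum_range_succ (fun k => kgf n (m + 1) k) (n + 2)
    have hz0 : kgf n (m + 1) 0 = 0 := kgf_k0 n (m + 1)
    have hzt : kgf n (m + 1) (n + 2) = 0 := by
      refine kgf_big n (m + 1) (n + 2) ?_
      intro hle
      push_cast at hle
      omega
    linear_combination e2 - e1 + hzt - hz0
  set F : ℕ → PowerSeries ℤ := fun i =>
    (-1 : PowerSeries ℤ) ^ i *
      ∑ k ∈ Finset.range (n + 2), (ggf n i k + hgf n i k + kgf n i k) with hF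
  have hcon : ∀ m ∈ Finset.range (n + 2),
      (∑ k ∈ Finset.range (n + 2),
          (-1 : PowerSeries ℤ) ^ m * (ggf n m k + hgf n m k + kgf n m k)) +
        (∑ k ∈ Finset.range (n + 2),
          (-1 : PowerSeries ℤ) ^ m *
            (ggf n (m + 1) k + hgf n (m + 1) k + kgf n (m + 1) (k + 1))) =
      F m - F (m + 1) := by
    intro m hm
    have hsplit : ∑ k ∈ Finset.range (n + 2),
        (ggf n (m + 1) k + hgf n (m + 1) k + kgf n (m + 1) (k + 1)) =
        ∑ k ∈ Finset.range (n + 2),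
        (ggf n (m + 1) k + hgf n (m + 1) k + kgf n (m + 1) k) := by
      rw [Finset.sum_add_distrib, Finset.sum_add_distrib, hsh m hm,
        Finset.sum_add_distrib, Finset.sum_add_distrib]
    rw [← Finset.mul_sum, ← Finset.mul_sum, hsplit, hF]
    simp only
    rw [pow_succ]
    ring
  have hR : (∑ m ∈ Finset.range (n + 2), ∑ k ∈ Finset.range (n + 2),
        (-1 : PowerSeries ℤ) ^ m * (ggf n m k + hgf n m k + kgf n m k)) +
      (∑ m ∈ Finset.range (n + 2), ∑ k ∈ Finset.range (n + 2),
        (-1 : PowerSeries ℤ) ^ m *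
          (ggf n (m + 1) k + hgf n (m + 1) k + kgf n (m + 1) (k + 1))) = 0 := by
    rw [← Finset.sum_add_distrib, Finset.sum_congr rfl hcon,
      Finset.sum_range_sub' F (n + 2)]
    have hF0 : F 0 = 0 := by
      rw [hF]
      simp only [pow_zero, one_mul]
      refine Finset.sum_eq_zero fun k _ => ?_
      rw [ggf_m0, hgf_m0, kgf_m0]
      simp
    have hFn : F (n + 2) = 0 := by
      rw [hF]
      simp only
      rw [Finset.sum_eq_zero, mul_zero]
      intro k _
      rw [ggf_gt _ _ _ (by omega), hgf_gt _ _ _ (by omega), kgf_gt _ _ _ (by omega)]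
      simp
    rw [hF0, hFn, sub_zero]
  have hL : (∑ m ∈ Finset.range (n + 2), ∑ k ∈ Finset.range (n + 2),
        (-1 : PowerSeries ℤ) ^ m *
          (pgf n m k + PowerSeries.X ^ (2 * n - 1) * pgf (n - 1) m k)) =
      (∑ m ∈ Finset.range (n + 2), ∑ k ∈ Finset.range (n + 2),
        (-1 : PowerSeries ℤ) ^ m * pgf n m k) +
      PowerSeries.X ^ (2 * n - 1) *
        (∑ m ∈ Finset.range (n + 2), ∑ k ∈ Finset.range (n + 2),
          (-1 : PowerSeries ℤ) ^ m * pgf (n - 1) m k) := by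
    rw [Finset.mul_sum, ← Finset.sum_add_distrib]
    refine Finset.sum_congr rfl fun m _ => ?_
    rw [Finset.mul_sum, ← Finset.sum_add_distrib]
    refine Finset.sum_congr rfl fun k _ => ?_
    ring
  have e0 := (hL.symm.trans h1).trans hR
  linear_combination e0
end
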